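/- arXiv:1311.2285 — 4 statements merged into one kernel-verified Lean document; each statement's English description precedes it below -/
import Mathlib

section
/- Let λ be an infinite cardinal and let X be a GO space. Then X is D-compact for some regular ultrafilter D over λ if and only if X is initially λ-compact. -/
universe u v

open Set Cardinal Filter Topology TopologicalSpace

section Defs

variable {X : Type u} [LinearOrder X]

/-- A subset `Y` of a linear order `X`, having no maximum, is `lam`-full in `X` on the right
if for every `y ∈ Y` the set `⋃ y' ∈ Y, (y, y')` (intervals computed in `X`)
has cardinality at least `lam`. -/
def FullRight (lam : Cardinal.{u}) (Y : Set X) : Prop :=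
  (¬ ∃ m ∈ Y, ∀ y ∈ Y, y ≤ m) ∧
    ∀ y ∈ Y, lam ≤ #(⋃ y' ∈ Y, Ioo y y')

/-- A subset `Y` of a linear order `X`, having no minimum, is `lam`-full in `X` on the left
if for every `y ∈ Y` the set `⋃ y' ∈ Y, (y', y)` (intervals computed in `X`)
has cardinality at least `lam`. -/
def FullLeft (lam : Cardinal.{u}) (Y : Set X) : Prop :=
  (¬ ∃ m ∈ Y, ∀ y ∈ Y, m ≤ y) ∧
    ∀ y ∈ Y, lam ≤ #(⋃ y' ∈ Y, Ioo y' y)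

/-- The pair `(A, B)` is a gap of the space `X`: `A`, `B` are open, `A ∪ B = X`,
every element of `A` is less than every element of `B`, `A` has no maximum and `B` has
no minimum (`A` or `B` may be empty). -/
def IsGap [TopologicalSpace X] (A B : Set X) : Prop :=
  IsOpen A ∧ IsOpen B ∧ A ∪ B = Set.univ ∧ (∀ a ∈ A, ∀ b ∈ B, a < b) ∧
    (¬ ∃ m ∈ A, ∀ a ∈ A, a ≤ m) ∧ (¬ ∃ m ∈ B, ∀ b ∈ B, m ≤ b)

/-- The pair `(A, B)` is a pseudo-gap of the space `X`: `A`, `B` are open and nonempty,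
`A ∪ B = X`, every element of `A` is less than every element of `B`, and either `A` has a
maximum and `B` has no minimum, or `A` has no maximum and `B` has a minimum. -/
def IsPseudoGap [TopologicalSpace X] (A B : Set X) : Prop :=
  IsOpen A ∧ IsOpen B ∧ A ∪ B = Set.univ ∧ (∀ a ∈ A, ∀ b ∈ B, a < b) ∧
    A.Nonempty ∧ B.Nonempty ∧
    (((∃ m ∈ A, ∀ a ∈ A, a ≤ m) ∧ ¬ ∃ m ∈ B, ∀ b ∈ B, m ≤ b) ∨
      ((¬ ∃ m ∈ A, ∀ a ∈ A, a ≤ m) ∧ ∃ m ∈ B, ∀ b ∈ B, m ≤ b))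

/-- The cofinality of `A`: the least cardinality of a subset of `A` cofinal in `A`. -/
noncomputable def cofinCard (A : Set X) : Cardinal.{u} :=
  sInf {c | ∃ S : Set X, S ⊆ A ∧ (∀ a ∈ A, ∃ s ∈ S, a ≤ s) ∧ c = #S}

/-- The coinitiality of `B`: the least cardinality of a subset of `B` coinitial in `B`. -/
noncomputable def coinitCard (B : Set X) : Cardinal.{u} :=
  sInf {c | ∃ S : Set X, S ⊆ B ∧ (∀ b ∈ B, ∃ s ∈ S, s ≤ b) ∧ c = #S}

/-- `mu` is a type of the gap `(A, B)`: `mu` is the cofinality of `A` or the coinitiality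
of `B`. -/
def IsGapType (mu : Cardinal.{u}) (A B : Set X) : Prop :=
  mu = cofinCard A ∨ mu = coinitCard B

/-- `mu` is the type of the pseudo-gap `(A, B)`: the cofinality of `A` if `B` has a minimum,
the coinitiality of `B` if `A` has a maximum. -/
def IsPseudoGapType (mu : Cardinal.{u}) (A B : Set X) : Prop :=
  ((∃ m ∈ B, ∀ b ∈ B, m ≤ b) ∧ mu = cofinCard A) ∨
    ((∃ m ∈ A, ∀ a ∈ A, a ≤ m) ∧ mu = coinitCard B)

end Defs

/-- A topological space is `[ν, ν]`-compact if every open cover of cardinality at most `ν`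
has a subcover of cardinality less than `ν`. -/
def NuNuCompact (X : Type u) [TopologicalSpace X] (ν : Cardinal.{u}) : Prop :=
  ∀ 𝒰 : Set (Set X), (∀ U ∈ 𝒰, IsOpen U) → ⋃₀ 𝒰 = Set.univ → #𝒰 ≤ ν →
    ∃ 𝒱 ⊆ 𝒰, #𝒱 < ν ∧ ⋃₀ 𝒱 = Set.univ

/-- A topological space is weakly `[ν, ν]`-compact if every open cover of cardinality at
most `ν` has a subfamily of cardinality less than `ν` whose union is dense. -/
def WeakNuNuCompact (X : Type u) [TopologicalSpace X] (ν : Cardinal.{u}) : Prop :=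
  ∀ 𝒰 : Set (Set X), (∀ U ∈ 𝒰, IsOpen U) → ⋃₀ 𝒰 = Set.univ → #𝒰 ≤ ν →
    ∃ 𝒱 ⊆ 𝒰, #𝒱 < ν ∧ Dense (⋃₀ 𝒱)

/-- A topological space is initially `lam`-compact if every open cover of cardinality at
most `lam` has a finite subcover. -/
def InitiallyCompact (X : Type u) [TopologicalSpace X] (lam : Cardinal.{u}) : Prop :=
  ∀ 𝒰 : Set (Set X), (∀ U ∈ 𝒰, IsOpen U) → ⋃₀ 𝒰 = Set.univ → #𝒰 ≤ lam →
    ∃ 𝒱 ⊆ 𝒰, 𝒱.Finite ∧ ⋃₀ 𝒱 = Set.univ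

/-- A topological space is weakly initially `lam`-compact if every open cover of cardinality
at most `lam` has a finite subfamily whose union is dense. -/
def WeakInitiallyCompact (X : Type u) [TopologicalSpace X] (lam : Cardinal.{u}) : Prop :=
  ∀ 𝒰 : Set (Set X), (∀ U ∈ 𝒰, IsOpen U) → ⋃₀ 𝒰 = Set.univ → #𝒰 ≤ lam →
    ∃ 𝒱 ⊆ 𝒰, 𝒱.Finite ∧ Dense (⋃₀ 𝒱)

/-- The sequence `x` `D`-converges to `p`: for every open neighbourhood `U` of `p`,
`{i | x i ∈ U} ∈ D`. -/
def DConv {I : Type v} {X : Type u} [TopologicalSpace X] (D : Ultrafilter I)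
    (x : I → X) (p : X) : Prop :=
  ∀ U : Set X, IsOpen U → p ∈ U → {i | x i ∈ U} ∈ D

/-- `X` is `D`-compact: every `I`-indexed sequence of elements of `X` `D`-converges to some
point of `X`. -/
def DCompact {I : Type v} (D : Ultrafilter I) (X : Type u) [TopologicalSpace X] : Prop :=
  ∀ x : I → X, ∃ p : X, DConv D x p

/-- `p` is a `D`-limit point of the sequence of sets `Y`: for every neighbourhood `U`
of `p`, `{i | U ∩ Y i ≠ ∅} ∈ D`. -/
def DLimitPt {I : Type v} {X : Type u} [TopologicalSpace X] (D : Ultrafilter I)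
    (Y : I → Set X) (p : X) : Prop :=
  ∀ U ∈ nhds p, {i | (U ∩ Y i).Nonempty} ∈ D

/-- `X` is `D`-pseudocompact: every `I`-indexed sequence of nonempty open sets of `X` has a
`D`-limit point. -/
def DPseudocompact {I : Type v} (D : Ultrafilter I) (X : Type u) [TopologicalSpace X] : Prop :=
  ∀ O : I → Set X, (∀ i, IsOpen (O i)) → (∀ i, (O i).Nonempty) → ∃ p : X, DLimitPt D O p

/-- The ultrafilter `D` is `ν`-decomposable: there is `f : I → ν` such that the preimage of
every subset of `ν` of cardinality less than `ν` is not in `D`. -/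
def Decomposable {I : Type v} (D : Ultrafilter I) (ν : Cardinal.{u}) : Prop :=
  ∃ f : I → ν.ord.ToType, ∀ S : Set ν.ord.ToType, #S < ν → f ⁻¹' S ∉ D

/-- An ultrafilter over a set is regular if there is a family of members of `D`, indexed by
the whole set, such that the intersection of every infinite subfamily is empty. -/
def IsRegularUltrafilter {κ : Type u} (D : Ultrafilter κ) : Prop :=
  ∃ Z : κ → Set κ, (∀ α, Z α ∈ D) ∧ ∀ S : Set κ, S.Infinite → ⋂ α ∈ S, Z α = ∅





section Helpers
set_option linter.unusedSectionVars false
variable {X : Type u} [LinearOrder X] [TopologicalSpace X] [T2Space X]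

lemma go_isOpen_Ioi (hGO : ∃ 𝓑 : Set (Set X), IsTopologicalBasis 𝓑 ∧ ∀ s ∈ 𝓑, s.OrdConnected)
    (a : X) : IsOpen (Set.Ioi a) := by
  obtain ⟨𝓑, hB, hconv⟩ := hGO
  rw [isOpen_iff_forall_mem_open]
  intro p hp
  obtain ⟨U, V, hU, hV, hpU, haV, hUV⟩ := t2_separation (show p ≠ a from (ne_of_gt hp))
  obtain ⟨s, hsB, hps, hsU⟩ := hB.exists_subset_of_mem_open hpU hU
  refine ⟨s, fun y hy => ?_, hB.isOpen hsB, hps⟩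
  by_contra hya
  simp only [Set.mem_Ioi, Set.mem_Iio, not_lt] at hya
  exact Set.disjoint_left.1 hUV (hsU ((hconv s hsB).out hy hps ⟨hya, le_of_lt hp⟩)) haV

lemma go_isOpen_Iio (hGO : ∃ 𝓑 : Set (Set X), IsTopologicalBasis 𝓑 ∧ ∀ s ∈ 𝓑, s.OrdConnected)
    (a : X) : IsOpen (Set.Iio a) := by
  obtain ⟨𝓑, hB, hconv⟩ := hGO
  rw [isOpen_iff_forall_mem_open]
  intro p hp
  obtain ⟨U, V, hU, hV, hpU, haV, hUV⟩ := t2_separation (show p ≠ a from (ne_of_lt hp))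
  obtain ⟨s, hsB, hps, hsU⟩ := hB.exists_subset_of_mem_open hpU hU
  refine ⟨s, fun y hy => ?_, hB.isOpen hsB, hps⟩
  by_contra hya
  simp only [Set.mem_Ioi, Set.mem_Iio, not_lt] at hya
  exact Set.disjoint_left.1 hUV (hsU ((hconv s hsB).out hps hy ⟨le_of_lt hp, hya⟩)) haV



omit [LinearOrder X] [T2Space X] in
lemma card_cover_le {lam : Cardinal.{u}} (hlam : ℵ₀ ≤ lam) (L : Set X) (𝒮 : Set (Set X))
    (h : #𝒮 ≤ lam) : #(insert L 𝒮 : Set (Set X)) ≤ lam := by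
  refine (Cardinal.mk_insert_le).trans ?_
  calc #𝒮 + 1 ≤ lam + 1 := by gcongr
    _ = lam := Cardinal.add_one_eq hlam

lemma cover_contra_right {lam : Cardinal.{u}} (hlam : ℵ₀ ≤ lam)
    (hic : InitiallyCompact X lam)
    (hGO : ∃ 𝓑 : Set (Set X), IsTopologicalBasis 𝓑 ∧ ∀ s ∈ 𝓑, s.OrdConnected)
    (L C : Set X) (hL : IsOpen L)
    (hunion : ∀ y, y ∈ L ∨ y ∈ C) (hLC : ∀ c ∈ C, c ∉ L)
    (S : Set X) (hScard : #S ≤ lam) (hSsub : S ⊆ C)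
    (hco : ∀ c ∈ C, ∃ s ∈ S, s < c) (hCne : C.Nonempty) : False := by
  have hopen : ∀ U ∈ insert L (Set.Ioi '' S), IsOpen U := by
    rintro V (rfl | ⟨s, _, rfl⟩)
    · exact hL
    · exact go_isOpen_Ioi hGO s
  have hcov : ⋃₀ insert L (Set.Ioi '' S) = Set.univ := by
    apply Set.eq_univ_iff_forall.mpr
    intro y
    rcases hunion y with hy | hy
    · exact ⟨L, Set.mem_insert _ _, hy⟩
    · obtain ⟨s, hsS, hlt⟩ := hco y hy
      exact ⟨Set.Ioi s, Set.mem_insert_of_mem _ (Set.mem_image_of_mem _ hsS), hlt⟩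
  obtain ⟨𝒱, h𝒱sub, h𝒱fin, h𝒱cov⟩ :=
    hic (insert L (Set.Ioi '' S)) hopen hcov
      (card_cover_le hlam L _ ((Cardinal.mk_image_le).trans hScard))
  have covered : ∀ y : X, ∃ V ∈ 𝒱, y ∈ V := fun y =>
    Set.mem_sUnion.mp (h𝒱cov ▸ Set.mem_univ y)
  have hmemG : ∀ c ∈ C, ∃ s, (s ∈ S ∧ Set.Ioi s ∈ 𝒱) ∧ s < c := by
    intro c hc
    obtain ⟨V, hV𝒱, hcV⟩ := covered c
    rcases h𝒱sub hV𝒱 with rfl | ⟨s, hsS, rfl⟩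
    · exact absurd hcV (hLC c hc)
    · exact ⟨s, ⟨hsS, hV𝒱⟩, hcV⟩
  set G : Set X := {s | s ∈ S ∧ Set.Ioi s ∈ 𝒱} with hGdef
  have hGfin : G.Finite := by
    have himg : (Set.Ioi '' G : Set (Set X)).Finite :=
      h𝒱fin.subset (by rintro _ ⟨s, hs, rfl⟩; exact hs.2)
    exact Set.Finite.of_finite_image himg (fun a _ b _ h => Set.Ioi_injective h)
  obtain ⟨c, hc⟩ := hCne
  obtain ⟨s0, hs0, _⟩ := hmemG c hc
  obtain ⟨sm, hsmG, hmin⟩ := Set.exists_min_image G id hGfin ⟨s0, hs0⟩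
  obtain ⟨s', hs'G, hlt⟩ := hmemG sm (hSsub hsmG.1)
  exact hlt.not_ge (hmin s' hs'G)

lemma cover_contra_left {lam : Cardinal.{u}} (hlam : ℵ₀ ≤ lam)
    (hic : InitiallyCompact X lam)
    (hGO : ∃ 𝓑 : Set (Set X), IsTopologicalBasis 𝓑 ∧ ∀ s ∈ 𝓑, s.OrdConnected)
    (L C : Set X) (hL : IsOpen L)
    (hunion : ∀ y, y ∈ L ∨ y ∈ C) (hLC : ∀ c ∈ C, c ∉ L)
    (S : Set X) (hScard : #S ≤ lam) (hSsub : S ⊆ C)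
    (hco : ∀ c ∈ C, ∃ s ∈ S, c < s) (hCne : C.Nonempty) : False := by
  have hopen : ∀ U ∈ insert L (Set.Iio '' S), IsOpen U := by
    rintro V (rfl | ⟨s, _, rfl⟩)
    · exact hL
    · exact go_isOpen_Iio hGO s
  have hcov : ⋃₀ insert L (Set.Iio '' S) = Set.univ := by
    apply Set.eq_univ_iff_forall.mpr
    intro y
    rcases hunion y with hy | hy
    · exact ⟨L, Set.mem_insert _ _, hy⟩
    · obtain ⟨s, hsS, hlt⟩ := hco y hy
      exact ⟨Set.Iio s, Set.mem_insert_of_mem _ (Set.mem_image_of_mem _ hsS), hlt⟩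
  obtain ⟨𝒱, h𝒱sub, h𝒱fin, h𝒱cov⟩ :=
    hic (insert L (Set.Iio '' S)) hopen hcov
      (card_cover_le hlam L _ ((Cardinal.mk_image_le).trans hScard))
  have covered : ∀ y : X, ∃ V ∈ 𝒱, y ∈ V := fun y =>
    Set.mem_sUnion.mp (h𝒱cov ▸ Set.mem_univ y)
  have hmemG : ∀ c ∈ C, ∃ s, (s ∈ S ∧ Set.Iio s ∈ 𝒱) ∧ c < s := by
    intro c hc
    obtain ⟨V, hV𝒱, hcV⟩ := covered c
    rcases h𝒱sub hV𝒱 with rfl | ⟨s, hsS, rfl⟩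
    · exact absurd hcV (hLC c hc)
    · exact ⟨s, ⟨hsS, hV𝒱⟩, hcV⟩
  set G : Set X := {s | s ∈ S ∧ Set.Iio s ∈ 𝒱} with hGdef
  have hGfin : G.Finite := by
    have himg : (Set.Iio '' G : Set (Set X)).Finite :=
      h𝒱fin.subset (by rintro _ ⟨s, hs, rfl⟩; exact hs.2)
    exact Set.Finite.of_finite_image himg (fun a _ b _ h => Set.Iio_injective h)
  obtain ⟨c, hc⟩ := hCne
  obtain ⟨s0, hs0, _⟩ := hmemG c hc
  obtain ⟨sm, hsmG, hmax⟩ := Set.exists_max_image G id hGfin ⟨s0, hs0⟩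
  obtain ⟨s', hs'G, hlt⟩ := hmemG sm (hSsub hsmG.1)
  exact hlt.not_ge (hmax s' hs'G)



lemma dcompact_of_initiallyCompact {κ : Type u}
    (hGO : ∃ 𝓑 : Set (Set X), IsTopologicalBasis 𝓑 ∧ ∀ s ∈ 𝓑, s.OrdConnected)
    {lam : Cardinal.{u}} (hlam : ℵ₀ ≤ lam) (hκ : #κ ≤ lam)
    (hic : InitiallyCompact X lam) (D : Ultrafilter κ) : DCompact D X := by
  intro x
  by_contra hno
  push_neg at hno
  set E : Ultrafilter X := Ultrafilter.map x D with hEdef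
  have hE : ∀ U : Set X, U ∈ E ↔ x ⁻¹' U ∈ D := fun U => Ultrafilter.mem_map
  set A : Set X := {a : X | Set.Ioi a ∈ E} with hAdef
  have hAdown : ∀ a ∈ A, ∀ b, b ≤ a → b ∈ A := fun a ha b hba =>
    (hE _).mpr (Filter.mem_of_superset ((hE _).mp ha)
      (Set.preimage_mono (Set.Ioi_subset_Ioi hba)))
  have hAc : ∀ c, c ∉ A → Set.Iic c ∈ E := by
    intro c hc
    have := (Ultrafilter.compl_mem_iff_notMem (f := E)).mpr hc
    rwa [Set.compl_Ioi] at this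
  have hconv_of_singleton : ∀ p : X, {p} ∈ E → False := by
    intro p hp
    refine hno p (fun U hU hpU => (hE U).mp ?_)
    exact Filter.mem_of_superset hp (Set.singleton_subset_iff.mpr hpU)
  -- cardinality of image sets
  have hScard : ∀ T : Set κ, #(x '' T) ≤ lam := fun T =>
    (Cardinal.mk_image_le).trans ((Cardinal.mk_set_le T).trans hκ)
  by_cases hma : ∃ m ∈ A, ∀ a ∈ A, a ≤ m
  · obtain ⟨m, hmA, hmax⟩ := hma
    by_cases hmc : ∃ c, c ∉ A ∧ ∀ c', c' ∉ A → c ≤ c'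
    · -- Case 1: max below, min above: E is principal at c0
      obtain ⟨c0, hc0, hcmin⟩ := hmc
      have h1 : Set.Ioc m c0 ∈ E := by
        rw [← Set.Ioi_inter_Iic]
        exact Filter.inter_mem hmA (hAc c0 hc0)
      have hmc0 : m < c0 := by
        by_contra h
        exact hc0 (hAdown m hmA c0 (not_lt.mp h))
      have h2 : Set.Ioc m c0 = {c0} := by
        ext y
        constructor
        · rintro ⟨hmy, hyc⟩
          by_cases hy : y ∈ A
          · exact absurd (hmax y hy) (not_le.mpr hmy)
          · exact Set.mem_singleton_iff.mpr (le_antisymm hyc (hcmin y hy))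
        · rintro rfl
          exact ⟨hmc0, le_refl _⟩
      exact hconv_of_singleton c0 (h2 ▸ h1)
    · -- Case 2: max m of A, no min above
      push_neg at hmc
      have hcomp : ∀ y, y ∉ A ↔ m < y := by
        intro y
        constructor
        · intro hy
          by_contra h
          exact hy (hAdown m hmA y (not_lt.mp h))
        · intro hy hyA
          exact (not_le.mpr hy) (hmax y hyA)
      by_cases hcv : ∀ U : Set X, IsOpen U → m ∈ U → U ∈ E
      · exact hno m (fun U hU hmU => (hE U).mp (hcv U hU hmU))
      · push_neg at hcv
        obtain ⟨U, hU, hmU, hUE⟩ := hcv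
        obtain ⟨𝓑, hB, hBconv⟩ := hGO
        obtain ⟨V, hVB, hmV, hVsub⟩ := hB.exists_subset_of_mem_open hmU hU
        have hVE : V ∉ E := fun h => hUE (Filter.mem_of_superset h hVsub)
        have hVIoi : ∀ v ∈ V, ¬ m < v := by
          intro v hv hlt
          apply hVE
          have h3 : Set.Ioc m v ∈ E := by
            rw [← Set.Ioi_inter_Iic]
            exact Filter.inter_mem hmA (hAc v ((hcomp v).mpr hlt))
          exact Filter.mem_of_superset h3
            (fun y hy => (hBconv V hVB).out hmV hv ⟨hy.1.le, hy.2⟩)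
        have hLopen : IsOpen (Set.Iic m) := by
          have heq : Set.Iic m = Set.Iio m ∪ V := by
            ext y
            constructor
            · intro hy
              rcases lt_or_eq_of_le hy with h | h
              · exact Or.inl h
              · exact Or.inr (h ▸ hmV)
            · rintro (h | h)
              · exact le_of_lt h
              · exact not_lt.mp (hVIoi y h)
          rw [heq]
          exact (go_isOpen_Iio ⟨𝓑, hB, hBconv⟩ m).union (hB.isOpen hVB)
        set T : Set κ := x ⁻¹' (Set.Ioi m) with hTdef
        have hT : T ∈ D := (hE _).mp hmA
        refine cover_contra_right hlam hic ⟨𝓑, hB, hBconv⟩ (Set.Iic m) (Set.Ioi m)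
          hLopen (fun y => le_or_gt y m) (fun c hc => not_le.mpr hc)
          (x '' T) (hScard T) (by rintro s ⟨i, hi, rfl⟩; exact hi) ?_
          (Ultrafilter.nonempty_of_mem (show Set.Ioi m ∈ E from hmA))
        intro c hc
        obtain ⟨c', hc'nA, hc'lt⟩ := hmc c ((hcomp c).mpr hc)
        have h3 : Set.Ioc m c' ∈ E := by
          rw [← Set.Ioi_inter_Iic]
          exact Filter.inter_mem hmA (hAc c' hc'nA)
        obtain ⟨i, hi⟩ := Ultrafilter.nonempty_of_mem ((hE _).mp h3)
        exact ⟨x i, Set.mem_image_of_mem x (show x i ∈ Set.Ioi m from hi.1),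
          lt_of_le_of_lt hi.2 hc'lt⟩
  · -- no max of A
    push_neg at hma
    by_cases hmc : ∃ c, c ∉ A ∧ ∀ c', c' ∉ A → c ≤ c'
    · -- Case 3: min c0 of complement, A has no max
      obtain ⟨c0, hc0nA, hcmin⟩ := hmc
      have hcomp : ∀ y, y ∈ A ↔ y < c0 := by
        intro y
        constructor
        · intro hy
          by_contra h
          exact hc0nA (hAdown y hy c0 (not_lt.mp h))
        · intro hy
          by_contra h
          exact (not_le.mpr hy) (hcmin y h)
      by_cases hcv : ∀ U : Set X, IsOpen U → c0 ∈ U → U ∈ E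
      · exact hno c0 (fun U hU hmU => (hE U).mp (hcv U hU hmU))
      · push_neg at hcv
        obtain ⟨U, hU, hc0U, hUE⟩ := hcv
        obtain ⟨𝓑, hB, hBconv⟩ := hGO
        obtain ⟨V, hVB, hc0V, hVsub⟩ := hB.exists_subset_of_mem_open hc0U hU
        have hVE : V ∉ E := fun h => hUE (Filter.mem_of_superset h hVsub)
        have hVIio : ∀ v ∈ V, ¬ v < c0 := by
          intro v hv hlt
          apply hVE
          have h3 : Set.Ioc v c0 ∈ E := by
            rw [← Set.Ioi_inter_Iic]
            exact Filter.inter_mem ((hcomp v).mpr hlt) (hAc c0 hc0nA)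
          exact Filter.mem_of_superset h3
            (fun y hy => (hBconv V hVB).out hv hc0V ⟨hy.1.le, hy.2⟩)
        have hLopen : IsOpen (Set.Ici c0) := by
          have heq : Set.Ici c0 = Set.Ioi c0 ∪ V := by
            ext y
            constructor
            · intro hy
              rcases lt_or_eq_of_le hy with h | h
              · exact Or.inl h
              · exact Or.inr (h ▸ hc0V)
            · rintro (h | h)
              · exact le_of_lt h
              · exact not_lt.mp (hVIio y h)
          rw [heq]
          exact (go_isOpen_Ioi ⟨𝓑, hB, hBconv⟩ c0).union (hB.isOpen hVB)
        have hAE : A ∈ E := by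
          rcases E.mem_or_compl_mem A with h | h
          · exact h
          · exfalso
            apply hVE
            have h1 : Set.Ici c0 ∈ E :=
              Filter.mem_of_superset h (fun y hy => not_lt.mp
                (fun hlt => hy ((hcomp y).mpr hlt)))
            have h2 : {c0} ∈ E := by
              have := Filter.inter_mem h1 (hAc c0 hc0nA)
              rwa [Set.Ici_inter_Iic, Set.Icc_self] at this
            exact Filter.mem_of_superset h2 (Set.singleton_subset_iff.mpr hc0V)
        set T : Set κ := x ⁻¹' A with hTdef
        have hT : T ∈ D := (hE _).mp hAE
        have hun : ∀ y, y ∈ Set.Ici c0 ∨ y ∈ A := by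
          intro y
          rcases lt_or_ge y c0 with h | h
          · exact Or.inr ((hcomp y).mpr h)
          · exact Or.inl h
        refine cover_contra_left hlam hic ⟨𝓑, hB, hBconv⟩ (Set.Ici c0) A
          hLopen hun (fun c hc => not_le.mpr ((hcomp c).mp hc))
          (x '' T) (hScard T) (by rintro s ⟨i, hi, rfl⟩; exact hi) ?_
          (Ultrafilter.nonempty_of_mem (show A ∈ E from hAE))
        intro a ha
        have h3 : A ∩ Set.Ioi a ∈ E := Filter.inter_mem hAE ha
        obtain ⟨i, hi⟩ := Ultrafilter.nonempty_of_mem ((hE _).mp h3)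
        exact ⟨x i, Set.mem_image_of_mem x (show x i ∈ A from hi.1), hi.2⟩
    · -- Case 4: no max of A, no min of complement
      push_neg at hmc
      rcases E.mem_or_compl_mem A with hAE | hAEc
      · -- 4a : A ∈ E
        have hLopen : IsOpen Aᶜ := by
          rw [isOpen_iff_forall_mem_open]
          intro c hc
          obtain ⟨c', hc'nA, hc'lt⟩ := hmc c hc
          refine ⟨Set.Ioi c', fun y hy hyA => hc'nA (hAdown y hyA c' hy.le), ?_, hc'lt⟩
          exact go_isOpen_Ioi hGO c'
        set T : Set κ := x ⁻¹' A with hTdef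
        have hun : ∀ y, y ∈ Aᶜ ∨ y ∈ A := fun y => (em (y ∈ A)).symm.imp id id
        refine cover_contra_left hlam hic hGO Aᶜ A
          hLopen hun (fun c hc h => h hc)
          (x '' T) (hScard T) (by rintro s ⟨i, hi, rfl⟩; exact hi) ?_
          (Ultrafilter.nonempty_of_mem (show A ∈ E from hAE))
        intro a ha
        have h3 : A ∩ Set.Ioi a ∈ E := Filter.inter_mem hAE ha
        obtain ⟨i, hi⟩ := Ultrafilter.nonempty_of_mem ((hE _).mp h3)
        exact ⟨x i, Set.mem_image_of_mem x (show x i ∈ A from hi.1), hi.2⟩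
      · -- 4b : Aᶜ ∈ E
        have hLopen : IsOpen A := by
          rw [isOpen_iff_forall_mem_open]
          intro a ha
          obtain ⟨a', ha'A, ha'lt⟩ := hma a ha
          refine ⟨Set.Iio a', fun y hy => hAdown a' ha'A y hy.le, ?_, ha'lt⟩
          exact go_isOpen_Iio hGO a'
        set T : Set κ := x ⁻¹' Aᶜ with hTdef
        refine cover_contra_right hlam hic hGO A Aᶜ
          hLopen (fun y => (em (y ∈ A)).imp id id) (fun c hc h => hc h)
          (x '' T) (hScard T) (by rintro s ⟨i, hi, rfl⟩; exact hi) ?_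
          (Ultrafilter.nonempty_of_mem (show Aᶜ ∈ E from hAEc))
        intro c hc
        obtain ⟨c', hc'nA, hc'lt⟩ := hmc c hc
        have h3 : Aᶜ ∩ Set.Iic c' ∈ E := Filter.inter_mem hAEc (hAc c' hc'nA)
        obtain ⟨i, hi⟩ := Ultrafilter.nonempty_of_mem ((hE _).mp h3)
        exact ⟨x i, Set.mem_image_of_mem x (show x i ∈ Aᶜ from hi.1),
          lt_of_le_of_lt hi.2 hc'lt⟩

end Helpers


lemma exists_regular_ultrafilter (κ : Type u) [Infinite κ] :
    ∃ D : Ultrafilter κ, IsRegularUltrafilter D := by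
  obtain ⟨e⟩ : Nonempty (Finset κ ≃ κ) := by
    rw [← Cardinal.eq, Cardinal.mk_finset_of_infinite]
  set Zh : κ → Set (Finset κ) := fun α => {s | α ∈ s} with hZh
  have hZinj : Function.Injective Zh := by
    intro α β h
    have : β ∈ ({β} : Finset κ) := Finset.mem_singleton_self β
    have h2 : ({β} : Finset κ) ∈ Zh α := h ▸ this
    have h3 : α ∈ ({β} : Finset κ) := h2
    exact Finset.mem_singleton.mp h3
  have hNB : (Filter.generate (Set.range Zh)).NeBot := by
    rw [Filter.neBot_iff]
    intro hbot
    have h0 : (∅ : Set (Finset κ)) ∈ Filter.generate (Set.range Zh) := by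
      rw [hbot]; exact Filter.mem_bot
    rw [Filter.mem_generate_iff] at h0
    obtain ⟨t, hts, htf, hsub⟩ := h0
    set Arel : Set κ := Zh ⁻¹' t with hArel
    have hArelfin : Arel.Finite := htf.preimage hZinj.injOn
    set A : Finset κ := hArelfin.toFinset with hA
    have : A ∈ ⋂₀ t := by
      intro u hu
      obtain ⟨α, rfl⟩ := hts hu
      have : α ∈ Arel := hu
      show α ∈ A
      exact hArelfin.mem_toFinset.mpr this
    exact (hsub this)
  let U0 : Ultrafilter (Finset κ) := @Ultrafilter.of _ _ hNB
  have hU0 : ∀ α, Zh α ∈ U0 := fun α =>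
    (@Ultrafilter.of_le _ _ hNB) (Filter.GenerateSets.basic (Set.mem_range_self α))
  refine ⟨U0.map e, fun α => {i | α ∈ e.symm i}, fun α => ?_, fun S hS => ?_⟩
  · rw [Ultrafilter.mem_map]
    have : e ⁻¹' {i | α ∈ e.symm i} = Zh α := by
      ext s; simp [hZh]
    rw [this]
    exact hU0 α
  · by_contra h
    obtain ⟨i, hi⟩ := Set.nonempty_iff_ne_empty.mpr h
    have : S ⊆ ↑(e.symm i) := by
      intro α hα
      have := Set.mem_iInter₂.mp hi α hα
      exact this
    exact hS ((e.symm i).finite_toSet.subset this)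

lemma initiallyCompact_of_dcompact {κ : Type u} {X : Type u} [TopologicalSpace X]
    {lam : Cardinal.{u}} (hκ : lam ≤ #κ) (D : Ultrafilter κ)
    (hreg : IsRegularUltrafilter D) (hcomp : DCompact D X) :
    InitiallyCompact X lam := by
  intro 𝒰 hopen hcov hcard
  by_contra hno
  push_neg at hno
  rcases Set.eq_empty_or_nonempty 𝒰 with rfl | h𝒰ne
  · exact hno ∅ (subset_refl _) Set.finite_empty (by simpa using hcov)
  obtain ⟨Z, hZmem, hZint⟩ := hreg
  have h𝒰κ : #↥𝒰 ≤ #κ := hcard.trans hκ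
  obtain ⟨g⟩ := Cardinal.le_def _ _ |>.mp h𝒰κ
  have : Nonempty ↥𝒰 := h𝒰ne.to_subtype
  set f : κ → ↥𝒰 := Function.invFun g with hf
  have hfsurj : Function.Surjective f := Function.invFun_surjective g.injective
  have hFin : ∀ i : κ, {α | i ∈ Z α}.Finite := by
    intro i
    by_contra h
    have h2 : i ∈ ⋂ α ∈ {α | i ∈ Z α}, Z α := Set.mem_iInter₂.mpr fun α hα => hα
    rw [hZint _ h] at h2
    exact h2
  have hx : ∀ i : κ, ∃ y : X, y ∉ ⋃₀ ((fun α => (f α : Set X)) '' {α | i ∈ Z α}) := by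
    intro i
    have hVsub : (fun α => (f α : Set X)) '' {α | i ∈ Z α} ⊆ 𝒰 := by
      rintro _ ⟨α, _, rfl⟩; exact (f α).2
    have hVfin : ((fun α => (f α : Set X)) '' {α | i ∈ Z α}).Finite := (hFin i).image _
    have := hno _ hVsub hVfin
    rw [← Set.ne_univ_iff_exists_notMem]
    exact this
  choose x hxspec using hx
  obtain ⟨p, hp⟩ := hcomp x
  have hpU : ∃ U ∈ 𝒰, p ∈ U := by
    have : p ∈ ⋃₀ 𝒰 := hcov ▸ Set.mem_univ p
    exact Set.mem_sUnion.mp this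
  obtain ⟨U, hU𝒰, hpUmem⟩ := hpU
  obtain ⟨β, hβ⟩ := hfsurj ⟨U, hU𝒰⟩
  have h1 : {i | x i ∈ U} ∈ D := hp U (hopen U hU𝒰) hpUmem
  obtain ⟨i, hiU, hiZ⟩ := Ultrafilter.nonempty_of_mem (Filter.inter_mem h1 (hZmem β))
  apply hxspec i
  refine ⟨U, ⟨β, hiZ, ?_⟩, hiU⟩
  show (f β : Set X) = U
  rw [hβ]


/-- A GO space is `D`-compact for some regular ultrafilter `D` over `lam` iff it is
initially `lam`-compact. -/
theorem stmt16 (lam : Cardinal.{u}) (hlam : ℵ₀ ≤ lam)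
    (X : Type u) [LinearOrder X] [TopologicalSpace X] [T2Space X]
    (hGO : ∃ 𝓑 : Set (Set X), IsTopologicalBasis 𝓑 ∧ ∀ s ∈ 𝓑, s.OrdConnected) :
    (∃ D : Ultrafilter lam.ord.ToType, IsRegularUltrafilter D ∧ DCompact D X) ↔
      InitiallyCompact X lam := by
  constructor
  · rintro ⟨D, hreg, hcomp⟩
    exact initiallyCompact_of_dcompact (le_of_eq (Cardinal.mk_ord_toType lam).symm) D hreg hcomp
  · intro hic
    have : Infinite lam.ord.ToType := by
      rw [Cardinal.infinite_iff, Cardinal.mk_ord_toType]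
      exact hlam
    obtain ⟨D, hreg⟩ := exists_regular_ultrafilter lam.ord.ToType
    exact ⟨D, hreg,
      dcompact_of_initiallyCompact hGO hlam (le_of_eq (Cardinal.mk_ord_toType lam)) hic D⟩
end

section
/- Let λ be an infinite cardinal, let (X_j)_{j∈J} be a family of nonempty topological spaces, and suppose that all the X_j with at most one exception are GO spaces. Then the product ∏_{j∈J} X_j (with the product topology) is initially λ-compact if and only if every X_j is initially λ-compact. -/
universe u v

open Set Cardinal Filter Topology TopologicalSpace

/-- A topological space is a GO space if it carries a linear order for which the topology is
Hausdorff and has a base of order-convex sets. -/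
def IsGOSpace (X : Type u) [TopologicalSpace X] : Prop :=
  ∃ li : LinearOrder X, T2Space X ∧
    ∃ 𝓑 : Set (Set X), IsTopologicalBasis 𝓑 ∧
      ∀ s ∈ 𝓑, @Set.OrdConnected X li.toPartialOrder.toPreorder s

lemma ray_open_Ioi {X : Type u} [TopologicalSpace X] [LinearOrder X] [T2Space X]
    {𝓑 : Set (Set X)} (hb : IsTopologicalBasis 𝓑) (hc : ∀ s ∈ 𝓑, s.OrdConnected)
    (a : X) : IsOpen (Ioi a) := by
  rw [hb.isOpen_iff]
  intro x hx
  obtain ⟨u, v, hu, hv, hxu, hav, huv⟩ := t2_separation (show x ≠ a from ne_of_gt hx)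
  obtain ⟨t, ht, hxt, htu⟩ := hb.exists_subset_of_mem_open hxu hu
  refine ⟨t, ht, hxt, fun z hz => lt_of_not_ge fun hza => ?_⟩
  have : a ∈ t := (hc t ht).out hz hxt ⟨hza, le_of_lt hx⟩
  exact (Set.disjoint_left.mp huv (htu this)) hav

lemma ray_open_Iio {X : Type u} [TopologicalSpace X] [LinearOrder X] [T2Space X]
    {𝓑 : Set (Set X)} (hb : IsTopologicalBasis 𝓑) (hc : ∀ s ∈ 𝓑, s.OrdConnected)
    (a : X) : IsOpen (Iio a) := by
  rw [hb.isOpen_iff]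
  intro x hx
  obtain ⟨u, v, hu, hv, hxu, hav, huv⟩ := t2_separation (show x ≠ a from ne_of_lt hx)
  obtain ⟨t, ht, hxt, htu⟩ := hb.exists_subset_of_mem_open hxu hu
  refine ⟨t, ht, hxt, fun z hz => lt_of_not_ge fun hza => ?_⟩
  have : a ∈ t := (hc t ht).out hxt hz ⟨le_of_lt hx, hza⟩
  exact (Set.disjoint_left.mp huv (htu this)) hav

lemma cover_contra_left_s17 {X : Type u} [TopologicalSpace X] [LinearOrder X] {lam : Cardinal.{u}}
    (hlam : ℵ₀ ≤ lam) (hcomp : InitiallyCompact X lam) (C : Set X) (S : Set X)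
    (hCopen : IsOpen C) (hSopen : ∀ s ∈ S, IsOpen (Iio s)) (hS : #S ≤ lam)
    (hSne : S.Nonempty) (hdisj : ∀ s ∈ S, s ∉ C)
    (hcov : ∀ y : X, y ∈ C ∨ ∃ s ∈ S, y < s) : False := by
  set 𝒰 : Set (Set X) := insert C (Iio '' S) with h𝒰
  have hop : ∀ U ∈ 𝒰, IsOpen U := by
    rintro U (rfl | ⟨s, hs, rfl⟩)
    · exact hCopen
    · exact hSopen s hs
  have hcv : ⋃₀ 𝒰 = Set.univ := by
    apply Set.eq_univ_of_forall
    intro y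
    rcases hcov y with hy | ⟨s, hs, hys⟩
    · exact ⟨C, Set.mem_insert _ _, hy⟩
    · exact ⟨Iio s, Set.mem_insert_of_mem _ ⟨s, hs, rfl⟩, hys⟩
  have hcard : #𝒰 ≤ lam := by
    calc #𝒰 ≤ #(Iio '' S : Set (Set X)) + 1 := Cardinal.mk_insert_le
    _ ≤ lam + lam := by
        exact add_le_add ((Cardinal.mk_image_le).trans hS) (one_le_aleph0.trans hlam)
    _ = lam := Cardinal.add_eq_self hlam
  obtain ⟨𝒱, h𝒱sub, h𝒱fin, h𝒱cov⟩ := hcomp 𝒰 hop hcv hcard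
  set Fs : Set X := {s ∈ S | Iio s ∈ 𝒱} with hFs
  have hFsfin : Fs.Finite := by
    have himg : Iio '' Fs ⊆ 𝒱 := by rintro _ ⟨s, hs, rfl⟩; exact hs.2
    exact Set.Finite.of_finite_image (h𝒱fin.subset himg) (Iio_injective.injOn)
  have key : ∀ y : X, y ∈ C ∨ ∃ s ∈ Fs, y < s := by
    intro y
    have : y ∈ ⋃₀ 𝒱 := h𝒱cov ▸ Set.mem_univ y
    obtain ⟨V, hV𝒱, hyV⟩ := this
    rcases h𝒱sub hV𝒱 with rfl | ⟨s, hs, rfl⟩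
    · exact Or.inl hyV
    · exact Or.inr ⟨s, ⟨hs, hV𝒱⟩, hyV⟩
  have hFsne : Fs.Nonempty := by
    obtain ⟨s₀, hs₀⟩ := hSne
    rcases key s₀ with h | ⟨s, hs, _⟩
    · exact absurd h (hdisj s₀ hs₀)
    · exact ⟨s, hs⟩
  obtain ⟨a, haFs, hamax⟩ := hFsfin.exists_maximal hFsne
  rcases key a with h | ⟨s, hs, has⟩
  · exact hdisj a haFs.1 h
  · exact absurd (hamax hs (le_of_lt has)) (not_le.mpr has)

lemma cover_contra_right_s17 {X : Type u} [TopologicalSpace X] [LinearOrder X] {lam : Cardinal.{u}}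
    (hlam : ℵ₀ ≤ lam) (hcomp : InitiallyCompact X lam) (C : Set X) (S : Set X)
    (hCopen : IsOpen C) (hSopen : ∀ s ∈ S, IsOpen (Ioi s)) (hS : #S ≤ lam)
    (hSne : S.Nonempty) (hdisj : ∀ s ∈ S, s ∉ C)
    (hcov : ∀ y : X, y ∈ C ∨ ∃ s ∈ S, s < y) : False := by
  set 𝒰 : Set (Set X) := insert C (Ioi '' S) with h𝒰
  have hop : ∀ U ∈ 𝒰, IsOpen U := by
    rintro U (rfl | ⟨s, hs, rfl⟩)
    · exact hCopen
    · exact hSopen s hs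
  have hcv : ⋃₀ 𝒰 = Set.univ := by
    apply Set.eq_univ_of_forall
    intro y
    rcases hcov y with hy | ⟨s, hs, hys⟩
    · exact ⟨C, Set.mem_insert _ _, hy⟩
    · exact ⟨Ioi s, Set.mem_insert_of_mem _ ⟨s, hs, rfl⟩, hys⟩
  have hcard : #𝒰 ≤ lam := by
    calc #𝒰 ≤ #(Ioi '' S : Set (Set X)) + 1 := Cardinal.mk_insert_le
    _ ≤ lam + lam := add_le_add ((Cardinal.mk_image_le).trans hS) (one_le_aleph0.trans hlam)
    _ = lam := Cardinal.add_eq_self hlam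
  obtain ⟨𝒱, h𝒱sub, h𝒱fin, h𝒱cov⟩ := hcomp 𝒰 hop hcv hcard
  set Fs : Set X := {s ∈ S | Ioi s ∈ 𝒱} with hFs
  have hFsfin : Fs.Finite := by
    have himg : Ioi '' Fs ⊆ 𝒱 := by rintro _ ⟨s, hs, rfl⟩; exact hs.2
    exact Set.Finite.of_finite_image (h𝒱fin.subset himg) (Ioi_injective.injOn)
  have key : ∀ y : X, y ∈ C ∨ ∃ s ∈ Fs, s < y := by
    intro y
    have : y ∈ ⋃₀ 𝒱 := h𝒱cov ▸ Set.mem_univ y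
    obtain ⟨V, hV𝒱, hyV⟩ := this
    rcases h𝒱sub hV𝒱 with rfl | ⟨s, hs, rfl⟩
    · exact Or.inl hyV
    · exact Or.inr ⟨s, ⟨hs, hV𝒱⟩, hyV⟩
  have hFsne : Fs.Nonempty := by
    obtain ⟨s₀, hs₀⟩ := hSne
    rcases key s₀ with h | ⟨s, hs, _⟩
    · exact absurd h (hdisj s₀ hs₀)
    · exact ⟨s, hs⟩
  obtain ⟨a, haFs, hamin⟩ := hFsfin.exists_minimal hFsne
  rcases key a with h | ⟨s, hs, has⟩
  · exact hdisj a haFs.1 h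
  · exact absurd (hamin hs (le_of_lt has)) (not_le.mpr has)

lemma initiallyCompact_fip {X : Type u} [TopologicalSpace X] {lam : Cardinal.{u}}
    (h : InitiallyCompact X lam) {ι : Type u} (C : ι → Set X) (hι : #ι ≤ lam)
    (hcl : ∀ i, IsClosed (C i)) (hfin : ∀ s : Finset ι, (⋂ i ∈ s, C i).Nonempty) :
    (⋂ i, C i).Nonempty := by
  by_contra hempty
  rw [Set.not_nonempty_iff_eq_empty] at hempty
  have hcov : ⋃₀ (Set.range fun i => (C i)ᶜ) = Set.univ := by
    apply Set.eq_univ_of_forall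
    intro x
    have : x ∉ ⋂ i, C i := hempty ▸ Set.notMem_empty x
    rw [Set.mem_iInter] at this
    push_neg at this
    obtain ⟨i, hi⟩ := this
    exact ⟨(C i)ᶜ, ⟨i, rfl⟩, hi⟩
  obtain ⟨𝒱, h𝒱sub, h𝒱fin, h𝒱cov⟩ := h _
    (by rintro _ ⟨i, rfl⟩; exact (hcl i).isOpen_compl) hcov (Cardinal.mk_range_le.trans hι)
  classical
  haveI := h𝒱fin.fintype
  have hchoice : ∀ V : 𝒱, ∃ i : ι, (C i)ᶜ = V := fun V => h𝒱sub V.2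
  choose g hg using hchoice
  obtain ⟨x, hx⟩ := hfin (Finset.univ.image g)
  have : x ∈ ⋃₀ 𝒱 := h𝒱cov ▸ Set.mem_univ x
  obtain ⟨V, hV𝒱, hxV⟩ := this
  have hxC : x ∈ C (g ⟨V, hV𝒱⟩) := by
    rw [Set.mem_iInter₂] at hx
    exact hx _ (Finset.mem_image_of_mem g (Finset.mem_univ _))
  have heq : (C (g ⟨V, hV𝒱⟩))ᶜ = V := hg ⟨V, hV𝒱⟩
  rw [← heq] at hxV
  exact hxV hxC

lemma go_dcompact {X : Type u} [TopologicalSpace X] {lam : Cardinal.{u}} (hlam : ℵ₀ ≤ lam)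
    (hgo : IsGOSpace X) (hcomp : InitiallyCompact X lam) {I : Type u} (hI : #I ≤ lam)
    (D : Ultrafilter I) : DCompact D X := by
  obtain ⟨li, hT2, 𝓑, hbasis, hconv⟩ := hgo
  letI := li
  haveI := hT2
  intro x
  set A : Set X := {y | {i | y < x i} ∈ D} with hA
  have hBmem : ∀ y : X, y ∉ A ↔ {i | x i ≤ y} ∈ D := by
    intro y
    have hc : ({i | y < x i})ᶜ = {i | x i ≤ y} := by ext i; simp [not_lt]
    rw [show ({i | x i ≤ y}) = ({i | y < x i})ᶜ from hc.symm,
      Ultrafilter.compl_mem_iff_notMem]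
    exact Iff.rfl
  have hlow : ∀ y ∈ A, ∀ y' : X, y' ≤ y → y' ∈ A := by
    intro y hy y' hy'
    exact Filter.mem_of_superset hy (fun i hi => lt_of_le_of_lt hy' hi)
  have hAB : ∀ a ∈ A, ∀ b : X, b ∉ A → a < b := by
    intro a ha b hb
    obtain ⟨i, h1, h2⟩ := Ultrafilter.nonempty_of_mem (Filter.inter_mem ha ((hBmem b).mp hb))
    exact lt_of_lt_of_le h1 h2
  have hScard : ∀ T : Set X, #(Set.range x ∩ T : Set X) ≤ lam := fun T =>
    ((Cardinal.mk_le_mk_of_subset Set.inter_subset_left).trans Cardinal.mk_range_le).trans hI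
  by_cases hBmin : ∃ b, b ∉ A ∧ ∀ y, y ∉ A → b ≤ y
  · obtain ⟨b, hbB, hbmin⟩ := hBmin
    by_cases hAmax : ∃ m ∈ A, ∀ a ∈ A, a ≤ m
    · -- Case I : A has max, B has min b ⇒ p = b
      obtain ⟨m, hmA, hmax⟩ := hAmax
      have hbge : {i | b ≤ x i} ∈ D := by
        refine Filter.mem_of_superset hmA (fun i (hi : m < x i) => ?_)
        have : x i ∉ A := fun hxA => absurd (hmax _ hxA) (not_le.mpr hi)
        exact hbmin _ this
      refine ⟨b, fun U hUopen hbU => ?_⟩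
      by_contra hUD
      have h1 : {i | x i ∈ U}ᶜ ∈ D := Ultrafilter.compl_mem_iff_notMem.mpr hUD
      have h2 : {i | b < x i} ∈ D := by
        refine Filter.mem_of_superset (Filter.inter_mem hbge h1) ?_
        rintro i ⟨h3, h4⟩
        rcases lt_or_eq_of_le (h3 : b ≤ x i) with h | h
        · exact h
        · exact absurd (show x i ∈ U by rw [← h]; exact hbU) h4
      exact hbB h2
    · -- Case II : B has min b, A has no max
      by_cases hconstb : {i | x i = b} ∈ D
      · refine ⟨b, fun U hUopen hbU => ?_⟩
        refine Filter.mem_of_superset hconstb (fun i hi => ?_)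
        show x i ∈ U
        rw [show x i = b from hi]
        exact hbU
      · have hxlt : {i | x i < b} ∈ D := by
          have h1 : {i | x i ≤ b} ∈ D := (hBmem b).mp hbB
          have h2 : {i | x i = b}ᶜ ∈ D := Ultrafilter.compl_mem_iff_notMem.mpr hconstb
          refine Filter.mem_of_superset (Filter.inter_mem h1 h2) ?_
          rintro i ⟨h3, h4⟩
          exact lt_of_le_of_ne h3 h4
        have hIioA : ∀ y, y < b → y ∈ A := by
          intro y hy
          by_contra hyA
          exact absurd (hbmin y hyA) (not_le.mpr hy)
        by_cases hmeet : ∀ W ∈ 𝓑, b ∈ W → (W ∩ Iio b).Nonempty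
        · refine ⟨b, fun U hUopen hbU => ?_⟩
          obtain ⟨W, hW𝓑, hbW, hWU⟩ := hbasis.exists_subset_of_mem_open hbU hUopen
          obtain ⟨u, huW, hub⟩ := hmeet W hW𝓑 hbW
          refine Filter.mem_of_superset (Filter.inter_mem (hIioA u hub) hxlt) ?_
          rintro i ⟨h3, h4⟩
          exact hWU ((hconv W hW𝓑).out huW hbW ⟨le_of_lt h3, le_of_lt h4⟩)
        · push_neg at hmeet
          obtain ⟨W, hW𝓑, hbW, hWem⟩ := hmeet
          exfalso
          have hCopen : IsOpen (Ici b) := by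
            have he : Ici b = W ∪ Ioi b := by
              apply Set.Subset.antisymm
              · intro y hy
                rcases eq_or_lt_of_le (hy : b ≤ y) with h | h
                · exact Or.inl (h ▸ hbW)
                · exact Or.inr h
              · rintro y (hy | hy)
                · by_contra hlt
                  exact Set.eq_empty_iff_forall_notMem.mp hWem y ⟨hy, not_le.mp hlt⟩
                · exact le_of_lt hy
            rw [he]
            exact (hbasis.isOpen hW𝓑).union (ray_open_Ioi hbasis hconv b)
          refine cover_contra_left_s17 hlam hcomp (Ici b) (Set.range x ∩ Iio b) hCopen
            (fun s _ => ray_open_Iio hbasis hconv s) (hScard _) ?_ ?_ ?_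
          · obtain ⟨i, hi⟩ := Ultrafilter.nonempty_of_mem hxlt
            exact ⟨x i, Set.mem_range_self i, hi⟩
          · rintro s ⟨-, hs⟩ hsC
            exact absurd hsC (not_le.mpr hs)
          · intro y
            rcases le_or_gt b y with h | h
            · exact Or.inl h
            · obtain ⟨i, h1, h2⟩ := Ultrafilter.nonempty_of_mem
                (Filter.inter_mem (hIioA y h : y ∈ A) hxlt)
              exact Or.inr ⟨x i, ⟨Set.mem_range_self i, h2⟩, h1⟩
  · push_neg at hBmin
    have hnomin : ∀ b, b ∉ A → ∃ y, y ∉ A ∧ y < b := by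
      intro b hb
      exact hBmin b hb
    by_cases hAmax : ∃ m ∈ A, ∀ a ∈ A, a ≤ m
    · -- Case III : A has max m, B has no min
      obtain ⟨m, hmA, hmax⟩ := hAmax
      have hgtB : ∀ w, m < w → w ∉ A := fun w hw hwA => absurd (hmax w hwA) (not_le.mpr hw)
      by_cases hmeet : ∀ W ∈ 𝓑, m ∈ W → (W ∩ Ioi m).Nonempty
      · refine ⟨m, fun U hUopen hmU => ?_⟩
        obtain ⟨W, hW𝓑, hmW, hWU⟩ := hbasis.exists_subset_of_mem_open hmU hUopen
        obtain ⟨w, hwW, hmw⟩ := hmeet W hW𝓑 hmW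
        have hle : {i | x i ≤ w} ∈ D := (hBmem w).mp (hgtB w hmw)
        refine Filter.mem_of_superset (Filter.inter_mem hmA hle) ?_
        rintro i ⟨h1, h2⟩
        exact hWU ((hconv W hW𝓑).out hmW hwW ⟨le_of_lt h1, h2⟩)
      · push_neg at hmeet
        obtain ⟨W, hW𝓑, hmW, hWem⟩ := hmeet
        exfalso
        have hCopen : IsOpen (Iic m) := by
          have he : Iic m = W ∪ Iio m := by
            apply Set.Subset.antisymm
            · intro y hy
              rcases eq_or_lt_of_le (hy : y ≤ m) with h | h
              · exact Or.inl (h ▸ hmW)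
              · exact Or.inr h
            · rintro y (hy | hy)
              · by_contra hlt
                exact Set.eq_empty_iff_forall_notMem.mp hWem y ⟨hy, not_le.mp hlt⟩
              · exact le_of_lt hy
          rw [he]
          exact (hbasis.isOpen hW𝓑).union (ray_open_Iio hbasis hconv m)
        refine cover_contra_right_s17 hlam hcomp (Iic m) (Set.range x ∩ Ioi m) hCopen
          (fun s _ => ray_open_Ioi hbasis hconv s) (hScard _) ?_ ?_ ?_
        · obtain ⟨i, hi⟩ := Ultrafilter.nonempty_of_mem hmA
          exact ⟨x i, Set.mem_range_self i, hi⟩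
        · rintro s ⟨-, hs⟩ hsC
          exact absurd hsC (not_le.mpr hs)
        · intro y
          rcases le_or_gt y m with h | h
          · exact Or.inl h
          · obtain ⟨y', hy'B, hy'y⟩ := hnomin y (hgtB y h)
            obtain ⟨i, h1, h2⟩ := Ultrafilter.nonempty_of_mem
              (Filter.inter_mem hmA ((hBmem y').mp hy'B))
            exact Or.inr ⟨x i, ⟨Set.mem_range_self i, h1⟩, lt_of_le_of_lt h2 hy'y⟩
    · -- Case IV : no max, no min (gap)
      push_neg at hAmax
      have hnomax : ∀ m ∈ A, ∃ a ∈ A, m < a := by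
        intro m hm
        exact hAmax m hm
      exfalso
      by_cases hWA : {i | x i ∈ A} ∈ D
      · have hBopen : IsOpen Aᶜ := by
          have he : Aᶜ = ⋃ b ∈ Aᶜ, Ioi b := by
            apply Set.Subset.antisymm
            · intro z hz
              obtain ⟨y, hy1, hy2⟩ := hnomin z hz
              exact Set.mem_biUnion hy1 hy2
            · intro z hz
              simp only [Set.mem_iUnion] at hz
              obtain ⟨b, hb, hzb⟩ := hz
              intro hzA
              exact absurd (hAB z hzA b hb) (not_lt.mpr (le_of_lt hzb))
          rw [he]
          exact isOpen_biUnion (fun b _ => ray_open_Ioi hbasis hconv b)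
        refine cover_contra_left_s17 hlam hcomp Aᶜ (Set.range x ∩ A) hBopen
          (fun s _ => ray_open_Iio hbasis hconv s) (hScard _) ?_ ?_ ?_
        · obtain ⟨i, hi⟩ := Ultrafilter.nonempty_of_mem hWA
          exact ⟨x i, Set.mem_range_self i, hi⟩
        · rintro s ⟨-, hs⟩ hsC
          exact hsC hs
        · intro y
          by_cases hy : y ∈ A
          · obtain ⟨i, h1, h2⟩ := Ultrafilter.nonempty_of_mem (Filter.inter_mem hy hWA)
            exact Or.inr ⟨x i, ⟨Set.mem_range_self i, h2⟩, h1⟩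
          · exact Or.inl hy
      · have hWB : {i | x i ∈ A}ᶜ ∈ D := Ultrafilter.compl_mem_iff_notMem.mpr hWA
        have hAopen : IsOpen A := by
          have he : A = ⋃ a ∈ A, Iio a := by
            apply Set.Subset.antisymm
            · intro z hz
              obtain ⟨a, ha1, ha2⟩ := hnomax z hz
              exact Set.mem_biUnion ha1 ha2
            · intro z hz
              simp only [Set.mem_iUnion] at hz
              obtain ⟨a, ha, hza⟩ := hz
              exact hlow a ha z (le_of_lt hza)
          rw [he]
          exact isOpen_biUnion (fun a _ => ray_open_Iio hbasis hconv a)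
        refine cover_contra_right_s17 hlam hcomp A (Set.range x ∩ Aᶜ) hAopen
          (fun s _ => ray_open_Ioi hbasis hconv s) (hScard _) ?_ ?_ ?_
        · obtain ⟨i, hi⟩ := Ultrafilter.nonempty_of_mem hWB
          exact ⟨x i, Set.mem_range_self i, hi⟩
        · rintro s ⟨-, hs⟩ hsC
          exact hs hsC
        · intro y
          by_cases hy : y ∈ A
          · exact Or.inl hy
          · obtain ⟨y', hy'B, hy'y⟩ := hnomin y hy
            obtain ⟨i, h1, h2⟩ := Ultrafilter.nonempty_of_mem
              (Filter.inter_mem ((hBmem y').mp hy'B) hWB)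
            exact Or.inr ⟨x i, ⟨Set.mem_range_self i, h2⟩, lt_of_le_of_lt h1 hy'y⟩

/-- If all factors with at most one exception are GO spaces, the product is initially
`lam`-compact iff every factor is. -/
theorem stmt17 (lam : Cardinal.{u}) (hlam : ℵ₀ ≤ lam)
    (J : Type u) (X : J → Type u) [∀ j, TopologicalSpace (X j)]
    (hne : ∀ j, Nonempty (X j))
    (hGO : ∃ E : Set J, E.Subsingleton ∧ ∀ j ∉ E, IsGOSpace (X j)) :
    InitiallyCompact (∀ j, X j) lam ↔ ∀ j, InitiallyCompact (X j) lam := by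
  classical
  constructor
  · intro h j 𝒰j hopj hcovj hcardj
    set π : (∀ k, X k) → X j := fun f => f j with hπ
    have hsurj : Function.Surjective π := fun xj =>
      ⟨Function.update (fun k => (hne k).some) j xj, Function.update_self _ _ _⟩
    set 𝒰 : Set (Set (∀ k, X k)) := (fun U => π ⁻¹' U) '' 𝒰j with h𝒰
    obtain ⟨𝒱, h𝒱sub, h𝒱fin, h𝒱cov⟩ := h 𝒰
      (by rintro _ ⟨U, hU, rfl⟩; exact (hopj U hU).preimage (continuous_apply j))
      (by
        apply Set.eq_univ_of_forall
        intro f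
        have : π f ∈ ⋃₀ 𝒰j := hcovj ▸ Set.mem_univ _
        obtain ⟨U, hU, hfU⟩ := this
        exact ⟨π ⁻¹' U, ⟨U, hU, rfl⟩, hfU⟩)
      (Cardinal.mk_image_le.trans hcardj)
    obtain ⟨𝒲, h𝒲sub, h𝒲img⟩ := Set.subset_image_iff.mp h𝒱sub
    refine ⟨𝒲, h𝒲sub, ?_, ?_⟩
    · exact Set.Finite.of_finite_image (h𝒲img ▸ h𝒱fin) (hsurj.preimage_injective.injOn)
    · apply Set.eq_univ_of_forall
      intro xj
      set g : ∀ k, X k := Function.update (fun k => (hne k).some) j xj with hg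
      have : g ∈ ⋃₀ 𝒱 := h𝒱cov ▸ Set.mem_univ g
      obtain ⟨V, hV𝒱, hgV⟩ := this
      rw [← h𝒲img] at hV𝒱
      obtain ⟨U, hU𝒲, rfl⟩ := hV𝒱
      refine ⟨U, hU𝒲, ?_⟩
      have hgU : π g ∈ U := hgV
      have hπg : π g = xj := Function.update_self _ _ _
      rwa [hπg] at hgU
  · intro h
    rcases isEmpty_or_nonempty J with hJ | hJ
    · intro 𝒰 hop hcov hcard
      set pt : ∀ j, X j := fun j => isEmptyElim j with hpt
      have : pt ∈ ⋃₀ 𝒰 := hcov ▸ Set.mem_univ pt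
      obtain ⟨U, hU, hptU⟩ := this
      refine ⟨{U}, Set.singleton_subset_iff.mpr hU, Set.finite_singleton U, ?_⟩
      apply Set.eq_univ_of_forall
      intro f
      have : f = pt := funext fun j => isEmptyElim j
      exact ⟨U, rfl, this ▸ hptU⟩
    · obtain ⟨E, hEsub, hEgo⟩ := hGO
      have hex : ∃ e : J, ∀ j, j ≠ e → IsGOSpace (X j) := by
        rcases E.eq_empty_or_nonempty with rfl | ⟨e, he⟩
        · exact ⟨Classical.arbitrary J, fun j _ => hEgo j (Set.notMem_empty j)⟩
        · exact ⟨e, fun j hj => hEgo j (fun hjE => hj (hEsub hjE he))⟩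
      obtain ⟨e, hGOall⟩ := hex
      intro 𝒰 hop hcov hcard
      by_contra hnofin
      push_neg at hnofin
      have hIcard : #(Finset ↥𝒰) ≤ lam := by
        rcases finite_or_infinite ↥𝒰 with hf | hinf
        · haveI := hf
          haveI := Fintype.ofFinite ↥𝒰
          exact le_trans (le_of_lt (Cardinal.mk_lt_aleph0_iff.mpr inferInstance)) hlam
        · rw [Cardinal.mk_finset_of_infinite]; exact hcard
      have hzchoice : ∀ s : Finset ↥𝒰,
          ∃ zz : ∀ j, X j, zz ∉ ⋃₀ ((fun (U : ↥𝒰) => (U : Set (∀ j, X j))) '' ↑s) := by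
        intro s
        have hne' := hnofin ((fun (U : ↥𝒰) => (U : Set (∀ j, X j))) '' ↑s)
          (by rintro _ ⟨U, hU, rfl⟩; exact U.2) (s.finite_toSet.image _)
        exact (Set.ne_univ_iff_exists_notMem _).mp hne'
      choose z hz using hzchoice
      have hz' : ∀ (s : Finset ↥𝒰) (U : ↥𝒰), U ∈ s → z s ∉ (U : Set (∀ j, X j)) := by
        intro s U hU hmem
        exact hz s ⟨U, Set.mem_image_of_mem _ hU, hmem⟩
      set C : Finset ↥𝒰 → Set (X e) := fun s => closure ((fun t => z t e) '' {t | s ⊆ t})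
        with hC
      have hCne : (⋂ s, C s).Nonempty := by
        refine initiallyCompact_fip (h e) C hIcard (fun s => isClosed_closure) ?_
        intro F
        refine ⟨z (F.sup id) e, Set.mem_iInter₂.mpr fun s hs => ?_⟩
        exact subset_closure ⟨F.sup id, Finset.le_sup (f := id) hs, rfl⟩
      obtain ⟨xe, hxe⟩ := hCne
      have hxe' : ∀ (U : Set (X e)), IsOpen U → xe ∈ U → ∀ s : Finset ↥𝒰,
          ∃ t, s ⊆ t ∧ z t e ∈ U := by
        intro U hU hxU s
        have h1 : xe ∈ C s := Set.mem_iInter.mp hxe s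
        obtain ⟨w, hw1, hw2⟩ := (mem_closure_iff.mp h1) U hU hxU
        obtain ⟨t, ht, rfl⟩ := hw2
        exact ⟨t, ht, hw1⟩
      haveI : Nonempty (Finset ↥𝒰 × {U : Set (X e) // IsOpen U ∧ xe ∈ U}) :=
        ⟨⟨∅, ⟨Set.univ, isOpen_univ, Set.mem_univ xe⟩⟩⟩
      set G : (Finset ↥𝒰 × {U : Set (X e) // IsOpen U ∧ xe ∈ U}) → Filter (Finset ↥𝒰) :=
        fun p => 𝓟 ({t | p.1 ⊆ t} ∩ {t | z t e ∈ p.2.1}) with hG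
      have hdir : Directed (· ≥ ·) G := by
        intro p q
        refine ⟨⟨p.1 ∪ q.1, ⟨p.2.1 ∩ q.2.1, p.2.2.1.inter q.2.2.1, p.2.2.2, q.2.2.2⟩⟩, ?_, ?_⟩
        · refine Filter.principal_mono.mpr ?_
          rintro t ⟨h1, h2⟩
          exact ⟨(Finset.union_subset_iff.mp h1).1, h2.1⟩
        · refine Filter.principal_mono.mpr ?_
          rintro t ⟨h1, h2⟩
          exact ⟨(Finset.union_subset_iff.mp h1).2, h2.2⟩
      have hneb : ∀ p, (G p).NeBot := by
        intro p
        rw [hG, Filter.principal_neBot_iff]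
        obtain ⟨t, ht1, ht2⟩ := hxe' p.2.1 p.2.2.1 p.2.2.2 p.1
        exact ⟨t, ht1, ht2⟩
      haveI : (⨅ p, G p).NeBot := Filter.iInf_neBot_of_directed hdir hneb
      set D := Ultrafilter.of (⨅ p, G p) with hD
      have hofle : (D : Filter (Finset ↥𝒰)) ≤ ⨅ p, G p := Ultrafilter.of_le _
      have hGmem : ∀ p : Finset ↥𝒰 × {U : Set (X e) // IsOpen U ∧ xe ∈ U}, ({t | p.1 ⊆ t} ∩ {t | z t e ∈ p.2.1}) ∈ D := fun p =>
        hofle (Filter.le_def.mp (iInf_le G p) _ (Filter.mem_principal_self _))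
      have hT : ∀ s : Finset ↥𝒰, {t | s ⊆ t} ∈ D := by
        intro s
        exact Filter.mem_of_superset (hGmem ⟨s, ⟨Set.univ, isOpen_univ, Set.mem_univ xe⟩⟩)
          Set.inter_subset_left
      have hH : ∀ (U : Set (X e)), IsOpen U → xe ∈ U → {t | z t e ∈ U} ∈ D := by
        intro U hU hxU
        exact Filter.mem_of_superset (hGmem ⟨∅, ⟨U, hU, hxU⟩⟩) Set.inter_subset_right
      have hDlim : ∀ j, j ≠ e → ∃ p, DConv D (fun t => z t j) p := fun j hj =>
        go_dcompact hlam (hGOall j hj) (h j) hIcard D (fun t => z t j)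
      set q0 : ∀ j, X j := fun j =>
        if hj : j = e then (hne j).some else Classical.choose (hDlim j hj) with hq0
      set q : ∀ j, X j := Function.update q0 e xe with hq
      have hqe : q e = xe := Function.update_self e xe q0
      have hqj : ∀ j (hj : j ≠ e), DConv D (fun t => z t j) (q j) := by
        intro j hj
        have hh : q j = Classical.choose (hDlim j hj) := by
          rw [hq, Function.update_of_ne hj, hq0]
          exact dif_neg hj
        rw [hh]
        exact Classical.choose_spec (hDlim j hj)
      have hqmem : q ∈ ⋃₀ 𝒰 := hcov ▸ Set.mem_univ q
      obtain ⟨U₀, hU₀, hqU₀⟩ := hqmem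
      obtain ⟨F, V, hFV, hsub⟩ := isOpen_pi_iff.mp (hop U₀ hU₀) q hqU₀
      have hM : (⋂ j ∈ F, {t | z t j ∈ V j}) ∈ D := by
        rw [← Ultrafilter.mem_coe, Filter.biInter_finset_mem]
        intro j hj
        by_cases hje : j = e
        · subst hje
          exact hH (V j) (hFV j hj).1 (by rw [← hqe]; exact (hFV j hj).2)
        · exact hqj j hje (V j) (hFV j hj).1 (hFV j hj).2
      have hE : {t | (⟨U₀, hU₀⟩ : ↥𝒰) ∈ t} ∈ D := by
        refine Filter.mem_of_superset (hT {⟨U₀, hU₀⟩}) ?_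
        intro t ht
        exact Finset.singleton_subset_iff.mp ht
      obtain ⟨t, htM, htE⟩ := Ultrafilter.nonempty_of_mem (Filter.inter_mem hM hE)
      have hzt : z t ∈ U₀ := by
        apply hsub
        rw [Set.mem_pi]
        intro j hj
        exact Set.mem_iInter₂.mp htM j hj
      exact hz' t ⟨U₀, hU₀⟩ htE hzt
end

section
/- Let λ be an infinite cardinal, let (X_j)_{j∈J} be a family of nonempty topological spaces, and suppose that all the X_j with at most one exception are GO spaces. Then the product ∏_{j∈J} X_j (with the product topology) is weakly initially λ-compact if and only if every X_j is weakly initially λ-compact. -/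
universe u v

open Set Cardinal Filter Topology TopologicalSpace

section GO
variable {X : Type u} [TopologicalSpace X]

lemma rays_open [LinearOrder X] [T1Space X]
    {𝓑 : Set (Set X)} (hb : IsTopologicalBasis 𝓑) (hc : ∀ s ∈ 𝓑, s.OrdConnected) (a : X) :
    IsOpen (Ioi a) ∧ IsOpen (Iio a) := by
  constructor
  · rw [isOpen_iff_forall_mem_open]
    intro y hy
    obtain ⟨V, hV𝓑, hyV, hVsub⟩ := hb.exists_subset_of_mem_open
      (show y ∈ ({a}ᶜ : Set X) from fun h => hy.ne' h) (isOpen_compl_singleton)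
    refine ⟨V, fun v hv => ?_, hb.isOpen hV𝓑, hyV⟩
    by_contra hva
    have hvlt : v < a := lt_of_le_of_ne (not_lt.1 hva) (fun h => hVsub hv h)
    exact hVsub ((hc V hV𝓑).out hv hyV ⟨hvlt.le, hy.le⟩) rfl
  · rw [isOpen_iff_forall_mem_open]
    intro y hy
    obtain ⟨V, hV𝓑, hyV, hVsub⟩ := hb.exists_subset_of_mem_open
      (show y ∈ ({a}ᶜ : Set X) from fun h => hy.ne h) (isOpen_compl_singleton)
    refine ⟨V, fun v hv => ?_, hb.isOpen hV𝓑, hyV⟩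
    by_contra hva
    have hvlt : a < v := lt_of_le_of_ne (not_lt.1 hva) (fun h => hVsub hv h.symm)
    exact hVsub ((hc V hV𝓑).out hyV hv ⟨hy.le, hvlt.le⟩) rfl

lemma lemC {lam : Cardinal.{u}} (hlam : ℵ₀ ≤ lam)
    [LinearOrder X]
    {𝓑 : Set (Set X)} (hb : IsTopologicalBasis 𝓑) (hc : ∀ s ∈ 𝓑, s.OrdConnected)
    (hIoi : ∀ a : X, IsOpen (Ioi a)) (hIio : ∀ a : X, IsOpen (Iio a))
    (hw : WeakInitiallyCompact X lam)
    {I : Type u} (hI : #I ≤ lam) (D : Ultrafilter I) (x : I → X)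
    (hJ : {i | x i ∈ {b : X | {j | x j ≤ b} ∈ D}} ∈ D) :
    ∃ p, DConv D x p := by
  set B : Set X := {b : X | {j | x j ≤ b} ∈ D} with hBdef
  have hBup : ∀ {b b'}, b ∈ B → b ≤ b' → b' ∈ B := fun {b b'} hbB hle =>
    Filter.mem_of_superset hbB (fun i hi => le_trans hi hle)
  by_cases hmin : ∃ b ∈ B, ∀ b' ∈ B, b ≤ b'
  · obtain ⟨b, hbB, hbmin⟩ := hmin
    refine ⟨b, fun U hU hbU => ?_⟩
    refine Filter.mem_of_superset (Filter.inter_mem hJ hbB) ?_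
    rintro i ⟨h1, h2⟩
    have : x i = b := le_antisymm h2 (hbmin _ h1)
    simpa [this] using hbU
  have hBne : B.Nonempty := by
    rcases Set.eq_empty_or_nonempty B with h | h
    · exfalso
      have : ({i | x i ∈ B} : Set I) = ∅ := by rw [h]; simp
      rw [this] at hJ
      exact absurd hJ (by simp)
    · exact h
  have hnomin : ∀ b ∈ B, ∃ b' ∈ B, b' < b := by
    intro b hbB
    by_contra hcon
    push_neg at hcon
    exact hmin ⟨b, hbB, fun b' hb' => (hcon b' hb')⟩
  have hBopen : IsOpen B := by
    rw [isOpen_iff_forall_mem_open]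
    intro b hbB
    obtain ⟨b', hb'B, hlt⟩ := hnomin b hbB
    exact ⟨Ioi b', fun y hy => hBup hb'B hy.le, hIoi b', hlt⟩
  by_cases hAopen : IsOpen Bᶜ
  · exfalso
    set C : Set X := B ∩ Set.range x with hCdef
    have hCsubB : C ⊆ B := Set.inter_subset_left
    have hCcoi : ∀ b ∈ B, ∃ c ∈ C, c ≤ b := by
      intro b hbB
      obtain ⟨i, hi1, hi2⟩ := Filter.nonempty_of_mem (Filter.inter_mem hJ hbB)
      exact ⟨x i, ⟨hi1, ⟨i, rfl⟩⟩, hi2⟩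
    set 𝒰 : Set (Set X) := insert Bᶜ ((fun c => Ioi c) '' C) with h𝒰
    have hIoiInj : Function.Injective (fun c : X => Ioi c) := by
      intro a b h
      simp only [] at h
      by_contra hne
      rcases lt_or_gt_of_ne hne with hl | hl
      · have hmem : b ∈ Ioi a := hl
        rw [h] at hmem
        exact lt_irrefl b hmem
      · have hmem : a ∈ Ioi b := hl
        rw [← h] at hmem
        exact lt_irrefl a hmem
    have hcard : #𝒰 ≤ lam := by
      have h1 : #𝒰 ≤ #((fun c => Ioi c) '' C) + 1 := Cardinal.mk_insert_le
      have h2 : #((fun c => Ioi c) '' C) ≤ #C := Cardinal.mk_image_le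
      have h3 : #C ≤ #(Set.range x) := Cardinal.mk_le_mk_of_subset Set.inter_subset_right
      have h4 : #(Set.range x) ≤ #I := Cardinal.mk_range_le
      calc #𝒰 ≤ #I + 1 := h1.trans (by gcongr; exact (h2.trans h3).trans h4)
      _ ≤ lam + lam := by gcongr; exact Cardinal.one_le_aleph0.trans hlam
      _ = lam := Cardinal.add_eq_self hlam
    have hopens : ∀ U ∈ 𝒰, IsOpen U := by
      rintro U (rfl | ⟨c, _, rfl⟩)
      · exact hAopen
      · exact hIoi c
    have hcover : ⋃₀ 𝒰 = Set.univ := by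
      apply Set.eq_univ_of_forall
      intro y
      by_cases hyB : y ∈ B
      · obtain ⟨b', hb'B, hlt⟩ := hnomin y hyB
        obtain ⟨c, hcC, hcle⟩ := hCcoi b' hb'B
        exact ⟨Ioi c, Set.mem_insert_of_mem _ ⟨c, hcC, rfl⟩, lt_of_le_of_lt hcle hlt⟩
      · exact ⟨Bᶜ, Set.mem_insert _ _, hyB⟩
    obtain ⟨𝒱, h𝒱sub, h𝒱fin, h𝒱dense⟩ := hw 𝒰 hopens hcover hcard
    obtain ⟨b₀, hb₀⟩ := hBne
    obtain ⟨c₀, hc₀C, _⟩ := hCcoi b₀ hb₀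
    set T : Set X := C ∩ (fun c => Ioi c) ⁻¹' 𝒱 with hT
    have hTfin : T.Finite :=
      (Set.Finite.preimage hIoiInj.injOn h𝒱fin).inter_of_right _
    have hTB : insert c₀ T ⊆ B := by
      rintro t (rfl | ht)
      · exact hCsubB hc₀C
      · exact hCsubB ht.1
    obtain ⟨bs, hbsmem, hbsmin⟩ := Set.Finite.exists_minimalFor id _ (hTfin.insert c₀)
      ⟨c₀, Set.mem_insert _ _⟩
    have hbsle : ∀ t ∈ insert c₀ T, bs ≤ t := by
      intro t ht
      rcases le_total bs t with h | h
      · exact h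
      · exact hbsmin ht h
    have hbsB : bs ∈ B := hTB hbsmem
    obtain ⟨w, hwB, hwlt⟩ := hnomin bs hbsB
    have hWopen : IsOpen (Iio bs ∩ B) := (hIio bs).inter hBopen
    obtain ⟨y, hy1, hy2⟩ := (dense_iff_inter_open.1 h𝒱dense) _ hWopen ⟨w, hwlt, hwB⟩
    obtain ⟨V, hV𝒱, hyV⟩ := hy2
    rcases h𝒱sub hV𝒱 with rfl | ⟨c, hcC, rfl⟩
    · exact hyV hy1.2
    · have hcT : c ∈ insert c₀ T := Set.mem_insert_of_mem _ ⟨hcC, hV𝒱⟩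
      exact absurd (hyV.trans (hy1.1.trans_le (hbsle c hcT))) (lt_irrefl c)
  · -- Bᶜ not open : max of Bᶜ exists and lies in closure B
    have hAdown : ∀ {a a'}, a ∈ Bᶜ → a' ≤ a → a' ∈ Bᶜ := fun {a a'} ha hle hmem =>
      ha (hBup hmem hle)
    have hmax : ∃ m ∈ Bᶜ, ∀ a ∈ Bᶜ, a ≤ m := by
      by_contra hcon
      apply hAopen
      push_neg at hcon
      rw [isOpen_iff_forall_mem_open]
      intro a haA
      obtain ⟨a', ha'A, hlt⟩ := hcon a haA
      exact ⟨Iio a', fun y hy => hAdown ha'A hy.le, hIio a', hlt⟩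
    obtain ⟨m, hmA, hmmax⟩ := hmax
    have hmcl : m ∈ closure B := by
      by_contra hcl
      rw [mem_closure_iff] at hcl
      push_neg at hcl
      obtain ⟨O, hOopen, hmO, hOB⟩ := hcl
      apply hAopen
      have hOA : O ⊆ Bᶜ := fun z hz hzB =>
        (Set.eq_empty_iff_forall_notMem.1 hOB) z ⟨hz, hzB⟩
      have : Bᶜ = Iio m ∪ O := by
        apply Set.Subset.antisymm
        · intro a haA
          rcases lt_or_eq_of_le (hmmax a haA) with h | h
          · exact Or.inl h
          · exact Or.inr (h ▸ hmO)
        · rintro a (h | h)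
          · exact hAdown hmA h.le
          · exact hOA h
      rw [this]
      exact (hIio m).union hOopen
    refine ⟨m, fun U hU hmU => ?_⟩
    obtain ⟨V, hV𝓑, hmV, hVU⟩ := hb.exists_subset_of_mem_open hmU hU
    obtain ⟨b, hbV, hbB⟩ := mem_closure_iff.1 hmcl V (hb.isOpen hV𝓑) hmV
    have h1 : ({j | x j ≤ m} : Set I)ᶜ ∈ D := (Ultrafilter.compl_mem_iff_notMem).2 hmA
    refine Filter.mem_of_superset (Filter.inter_mem h1 (hbB : {j | x j ≤ b} ∈ D)) ?_
    rintro i ⟨hi1, hi2⟩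
    exact hVU ((hc V hV𝓑).out hmV hbV ⟨(not_le.1 hi1).le, hi2⟩)

end GO

section GO2
variable {X : Type u} [TopologicalSpace X]

lemma lemA {lam : Cardinal.{u}} (hlam : ℵ₀ ≤ lam) (hGO : IsGOSpace X)
    (hw : WeakInitiallyCompact X lam) {I : Type u} (hI : #I ≤ lam)
    (D : Ultrafilter I) (x : I → X) : ∃ p, DConv D x p := by
  obtain ⟨li, hT2, 𝓑, hb, hconv⟩ := hGO
  letI : LinearOrder X := li
  haveI : T2Space X := hT2
  have hIoi : ∀ a : X, IsOpen (Ioi a) := fun a => (rays_open hb hconv a).1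
  have hIio : ∀ a : X, IsOpen (Iio a) := fun a => (rays_open hb hconv a).2
  by_cases hJ : {i | x i ∈ {b : X | {j | x j ≤ b} ∈ D}} ∈ D
  · exact lemC hlam hb hconv hIoi hIio hw hI D x hJ
  · -- dualize
    letI : TopologicalSpace Xᵒᵈ := ‹TopologicalSpace X›
    have hpre : ∀ s : Set X, (OrderDual.ofDual ⁻¹' s : Set Xᵒᵈ) = s := fun s => rfl
    have him : ((fun s => OrderDual.ofDual ⁻¹' s) '' 𝓑 : Set (Set Xᵒᵈ)) = 𝓑 := by
      simp only [hpre, Set.image_id']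
      ext t; exact ⟨fun ⟨a, ha, e⟩ => e ▸ ha, fun ht => ⟨t, ht, rfl⟩⟩
    have hb' : IsTopologicalBasis (α := Xᵒᵈ) ((fun s => OrderDual.ofDual ⁻¹' s) '' 𝓑) := by
      rw [him]; exact hb
    have hconv' : ∀ s ∈ ((fun s => OrderDual.ofDual ⁻¹' s) '' 𝓑), Set.OrdConnected (α := Xᵒᵈ) s := by
      rintro s ⟨t, ht, rfl⟩
      exact (hconv t ht).dual
    have hw' : WeakInitiallyCompact Xᵒᵈ lam := hw
    set x' : I → Xᵒᵈ := fun i => OrderDual.toDual (x i) with hx'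
    have hJ' : {i | x' i ∈ {b : Xᵒᵈ | {j | x' j ≤ b} ∈ D}} ∈ D := by
      have h1 : ({i | x i ∈ {b : X | {j | x j ≤ b} ∈ D}} : Set I)ᶜ ∈ D :=
        (Ultrafilter.compl_mem_iff_notMem).2 hJ
      refine Filter.mem_of_superset h1 ?_
      intro i hi
      simp only [Set.mem_compl_iff, Set.mem_setOf_eq] at hi
      show {j | x' j ≤ x' i} ∈ D
      have h2 : ({j | x j ≤ x i} : Set I)ᶜ ∈ D := (Ultrafilter.compl_mem_iff_notMem).2 hi
      refine Filter.mem_of_superset h2 ?_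
      intro j hj
      simp only [Set.mem_compl_iff, Set.mem_setOf_eq] at hj
      show x' j ≤ x' i
      exact OrderDual.toDual_le_toDual.mpr (le_of_lt (not_le.1 hj))
    obtain ⟨p, hp⟩ := lemC (X := Xᵒᵈ) hlam hb' hconv'
      (fun a => hIio (OrderDual.ofDual a)) (fun a => hIoi (OrderDual.ofDual a)) hw' hI D x' hJ'
    exact ⟨OrderDual.ofDual p, hp⟩

end GO2

/-- If all factors with at most one exception are GO spaces, the product is weakly initially
`lam`-compact iff every factor is. -/
theorem stmt18 (lam : Cardinal.{u}) (hlam : ℵ₀ ≤ lam)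
    (J : Type u) (X : J → Type u) [∀ j, TopologicalSpace (X j)]
    (hne : ∀ j, Nonempty (X j))
    (hGO : ∃ E : Set J, E.Subsingleton ∧ ∀ j ∉ E, IsGOSpace (X j)) :
    WeakInitiallyCompact (∀ j, X j) lam ↔ ∀ j, WeakInitiallyCompact (X j) lam := by
  haveI : ∀ k, Nonempty (X k) := hne
  constructor
  · -- easy direction
    intro hP j 𝒰j hopen hcov hcard
    have hsurj : Function.Surjective (Function.eval j : (∀ k, X k) → X j) :=
      Function.surjective_eval j
    have hPopen : ∀ U ∈ (fun U => Function.eval j ⁻¹' U) '' 𝒰j, IsOpen U := by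
      rintro U ⟨W, hW, rfl⟩
      exact (hopen W hW).preimage (continuous_apply j)
    have hPcov : ⋃₀ ((fun U => Function.eval j ⁻¹' U) '' 𝒰j) = Set.univ := by
      apply Set.eq_univ_of_forall
      intro g
      have : g j ∈ ⋃₀ 𝒰j := hcov ▸ Set.mem_univ _
      obtain ⟨W, hW, hgW⟩ := this
      exact ⟨_, ⟨W, hW, rfl⟩, hgW⟩
    obtain ⟨𝒱, h𝒱sub, h𝒱fin, h𝒱dense⟩ :=
      hP _ hPopen hPcov ((Cardinal.mk_image_le).trans hcard)
    refine ⟨{U | U ∈ 𝒰j ∧ Function.eval j ⁻¹' U ∈ 𝒱}, fun U hU => hU.1, ?_, ?_⟩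
    · exact Set.Finite.subset (Set.Finite.preimage hsurj.preimage_injective.injOn h𝒱fin)
        (fun U hU => hU.2)
    · rw [dense_iff_inter_open]
      intro U hU hUne
      obtain ⟨g, hg1, V0, hV0𝒱, hgV0⟩ := (dense_iff_inter_open.1 h𝒱dense) _
        (hU.preimage (continuous_apply j)) (hUne.preimage hsurj)
      obtain ⟨W, hW𝒰, rfl⟩ := h𝒱sub hV0𝒱
      exact ⟨g j, hg1, Set.mem_sUnion.2 ⟨W, ⟨hW𝒰, hV0𝒱⟩, hgV0⟩⟩
  · -- hard direction
    intro h
    by_cases hJe : IsEmpty J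
    · intro 𝒰 hopen hcov hcard
      haveI : Unique (∀ j, X j) := Pi.uniqueOfIsEmpty X
      have hd : (default : ∀ j, X j) ∈ ⋃₀ 𝒰 := hcov ▸ Set.mem_univ _
      obtain ⟨U, hU, hdU⟩ := hd
      refine ⟨{U}, by simpa using hU, Set.finite_singleton _, ?_⟩
      have : ⋃₀ ({U} : Set (Set (∀ j, X j))) = Set.univ := by
        rw [Set.sUnion_singleton]
        exact Set.eq_univ_of_forall fun g => (Unique.eq_default g) ▸ hdU
      rw [this]
      exact dense_univ
    obtain ⟨E, hEsub, hEGO⟩ := hGO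
    haveI : Nonempty J := not_isEmpty_iff.1 hJe
    have hex : ∃ e : J, ∀ j, j ≠ e → IsGOSpace (X j) := by
      rcases Set.eq_empty_or_nonempty E with rfl | ⟨e, heE⟩
      · exact ⟨Classical.arbitrary J, fun j _ => hEGO j (Set.notMem_empty j)⟩
      · exact ⟨e, fun j hj => hEGO j (fun hjE => hj (hEsub hjE heE))⟩
    obtain ⟨e, hGOe⟩ := hex
    intro 𝒰 hopen hcov hcard
    by_contra hcon
    push_neg at hcon
    by_cases h𝒰fin : 𝒰.Finite
    · exact hcon 𝒰 (subset_refl _) h𝒰fin (hcov ▸ dense_univ)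
    haveI : Infinite ↥𝒰 := Set.infinite_coe_iff.2 h𝒰fin
    have hIcard : #(Finset ↥𝒰) ≤ lam := by
      rw [Cardinal.mk_finset_of_infinite]
      exact hcard
    -- Step 1 : boxes avoiding finite subfamilies
    have hbox : ∀ F : Finset ↥𝒰, ∃ (sF : Finset J) (u : ∀ j, Set (X j)) (f : ∀ j, X j),
        (∀ j ∈ sF, IsOpen (u j)) ∧ (∀ j ∈ sF, f j ∈ u j) ∧
        (∀ g : ∀ j, X j, (∀ j ∈ sF, g j ∈ u j) → ∀ U ∈ F, g ∉ (U : Set (∀ j, X j))) := by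
      intro F
      have hnd : ¬ Dense (⋃₀ ((fun (U : ↥𝒰) => (U : Set (∀ j, X j))) '' (F : Set ↥𝒰))) := by
        apply hcon
        · rintro V ⟨U, _, rfl⟩; exact U.2
        · exact (F.finite_toSet.image _)
      rw [dense_iff_inter_open] at hnd
      push_neg at hnd
      obtain ⟨O, hOopen, hOne, hOdisj⟩ := hnd
      obtain ⟨f0, hf0⟩ := hOne
      obtain ⟨sF, u, hu, hsub⟩ := (isOpen_pi_iff.1 hOopen) f0 hf0
      refine ⟨sF, u, f0, fun j hj => (hu j hj).1, fun j hj => (hu j hj).2, ?_⟩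
      intro g hg U hUF hgU
      have hgO : g ∈ O := hsub (fun j hj => hg j hj)
      exact (Set.eq_empty_iff_forall_notMem.1 hOdisj) g
        ⟨hgO, Set.mem_sUnion.2 ⟨(U : Set (∀ j, X j)), ⟨U, hUF, rfl⟩, hgU⟩⟩
    choose sF uF fF huopen hfu havoid using hbox
    classical
    set V : Finset ↥𝒰 → ∀ j, Set (X j) :=
      fun F j => if j ∈ sF F then uF F j else Set.univ with hV
    have hVopen : ∀ F j, IsOpen (V F j) := by
      intro F j; simp only [hV]; split
      · exact huopen F j ‹_›
      · exact isOpen_univ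
    have hfV : ∀ F j, fF F j ∈ V F j := by
      intro F j; simp only [hV]; split
      · exact hfu F j ‹_›
      · trivial
    have hVne : ∀ F j, (V F j).Nonempty := fun F j => ⟨fF F j, hfV F j⟩
    have hVavoid : ∀ F (g : ∀ j, X j), (∀ j, g j ∈ V F j) → ∀ U ∈ F, g ∉ (U : Set (∀ j, X j)) := by
      intro F g hg U hU
      refine havoid F g (fun j hj => ?_) U hU
      have := hg j
      simp only [hV, if_pos hj] at this
      exact this
    -- Step 2 : accumulation point in the exceptional factor
    have hstep2 : ∃ pe : X e, ∀ U : Set (X e), IsOpen U → pe ∈ U →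
        ∀ G : Finset ↥𝒰, ∃ F, G ⊆ F ∧ (V F e ∩ U).Nonempty := by
      by_contra hcon2
      push_neg at hcon2
      set Y : Finset ↥𝒰 → Set (X e) :=
        fun G => ⋃₀ {U | IsOpen U ∧ ∀ F, G ⊆ F → V F e ∩ U = ∅} with hY
      have hYopen : ∀ G, IsOpen (Y G) := fun G => isOpen_sUnion (fun U hU => hU.1)
      have hYcov : ⋃₀ (Set.range Y) = Set.univ := by
        apply Set.eq_univ_of_forall
        intro pe
        obtain ⟨U, hUo, hpeU, G, hG⟩ := hcon2 pe
        exact ⟨Y G, ⟨G, rfl⟩, ⟨U, ⟨hUo, hG⟩, hpeU⟩⟩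
      obtain ⟨𝒱e, h𝒱esub, h𝒱efin, h𝒱edense⟩ := h e (Set.range Y)
        (by rintro _ ⟨G, rfl⟩; exact hYopen G) hYcov (Cardinal.mk_range_le.trans hIcard)
      set g : Set (X e) → Finset ↥𝒰 := fun W => if hW : ∃ G, Y G = W then hW.choose else ∅ with hg
      set Gs : Finset ↥𝒰 := h𝒱efin.toFinset.sup g with hGs
      obtain ⟨z, hz1, W, hW𝒱, hzW⟩ := (dense_iff_inter_open.1 h𝒱edense) _
        (hVopen Gs e) (hVne Gs e)
      have hWex : ∃ G, Y G = W := h𝒱esub hW𝒱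
      have hgW : Y (g W) = W := by
        simp only [hg, dif_pos hWex]
        exact hWex.choose_spec
      have hle : g W ⊆ Gs := Finset.le_sup (h𝒱efin.mem_toFinset.2 hW𝒱)
      rw [← hgW] at hzW
      obtain ⟨U, ⟨hUo, hUprop⟩, hzU⟩ := hzW
      exact (Set.eq_empty_iff_forall_notMem.1 (hUprop Gs hle)) z ⟨hz1, hzU⟩
    obtain ⟨pe, hpe⟩ := hstep2
    -- Step 3 : the ultrafilter
    set Qt := {q : Set (X e) × Finset ↥𝒰 // IsOpen q.1 ∧ pe ∈ q.1} with hQt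
    set 𝔽 : Filter (Finset ↥𝒰) :=
      ⨅ q : Qt, Filter.principal ({F | (V F e ∩ q.1.1).Nonempty} ∩ {F | q.1.2 ⊆ F}) with h𝔽
    haveI h𝔽ne : 𝔽.NeBot := by
      apply Filter.iInf_neBot_of_directed
      · intro q1 q2
        refine ⟨⟨(q1.1.1 ∩ q2.1.1, q1.1.2 ∪ q2.1.2), q1.2.1.inter q2.2.1, q1.2.2, q2.2.2⟩, ?_, ?_⟩
        · apply Filter.principal_mono.2
          intro F hF
          exact ⟨hF.1.mono (Set.inter_subset_inter_right _ Set.inter_subset_left),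
            (Finset.union_subset_iff.1 hF.2).1⟩
        · apply Filter.principal_mono.2
          intro F hF
          exact ⟨hF.1.mono (Set.inter_subset_inter_right _ Set.inter_subset_right),
            (Finset.union_subset_iff.1 hF.2).2⟩
      · intro q
        rw [Filter.principal_neBot_iff]
        obtain ⟨F, hGF, hFne⟩ := hpe q.1.1 q.2.1 q.2.2 q.1.2
        exact ⟨F, hFne, hGF⟩
    set D : Ultrafilter (Finset ↥𝒰) := Ultrafilter.of 𝔽 with hD
    have hD𝔽 : (D : Filter (Finset ↥𝒰)) ≤ 𝔽 := Ultrafilter.of_le 𝔽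
    have hDA : ∀ U : Set (X e), IsOpen U → pe ∈ U → {F | (V F e ∩ U).Nonempty} ∈ D := by
      intro U hUo hpeU
      exact Filter.mem_of_superset
        (hD𝔽 (Filter.mem_iInf_of_mem (⟨(U, ∅), hUo, hpeU⟩ : Qt) (Filter.mem_principal_self _)))
        Set.inter_subset_left
    have hDG : ∀ G : Finset ↥𝒰, {F | G ⊆ F} ∈ D := by
      intro G
      exact Filter.mem_of_superset
        (hD𝔽 (Filter.mem_iInf_of_mem (⟨(Set.univ, G), isOpen_univ, Set.mem_univ _⟩ : Qt)
          (Filter.mem_principal_self _)))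
        Set.inter_subset_right
    -- Step 4 : D-limits in the GO factors
    have hlim : ∀ j : J, j ≠ e → ∃ p : X j, DConv D (fun F => fF F j) p := by
      intro j hj
      exact lemA hlam (hGOe j hj) (h j) hIcard D _
    choose plim hplim using hlim
    set p : ∀ j, X j :=
      Function.update (fun j => if hje : j = e then Classical.arbitrary _ else plim j hje) e pe
      with hp
    have hpe' : p e = pe := Function.update_self _ _ _
    have hpj : ∀ j (hj : j ≠ e), p j = plim j hj := by
      intro j hj
      simp only [hp, Function.update_of_ne hj, dif_neg hj]
    -- Step 5 : contradiction
    have hpU : p ∈ ⋃₀ 𝒰 := hcov ▸ Set.mem_univ _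
    obtain ⟨U0, hU0𝒰, hpU0⟩ := hpU
    obtain ⟨s, w, hw, hsub⟩ := (isOpen_pi_iff.1 (hopen U0 hU0𝒰)) p hpU0
    set We : Set (X e) := if e ∈ s then w e else Set.univ with hWe
    have hWeopen : IsOpen We := by
      simp only [hWe]; split
      · exact (hw e ‹_›).1
      · exact isOpen_univ
    have hpeWe : pe ∈ We := by
      simp only [hWe]; split
      · rw [← hpe']; exact (hw e ‹_›).2
      · trivial
    have hS : ({F | ({⟨U0, hU0𝒰⟩} : Finset ↥𝒰) ⊆ F} ∩ ({F | (V F e ∩ We).Nonempty} ∩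
        ⋂ j ∈ s.erase e, {F | fF F j ∈ w j})) ∈ D := by
      refine Filter.inter_mem (hDG _) (Filter.inter_mem (hDA _ hWeopen hpeWe) ?_)
      rw [Filter.biInter_finset_mem]
      intro j hj
      have hje : j ≠ e := Finset.ne_of_mem_erase hj
      have hjs : j ∈ s := Finset.mem_of_mem_erase hj
      have hwj : p j ∈ w j := (hw j hjs).2
      rw [hpj j hje] at hwj
      exact hplim j hje (w j) (hw j hjs).1 hwj
    obtain ⟨F, hF1, hF2, hF3⟩ := Filter.nonempty_of_mem hS
    simp only [Set.mem_iInter] at hF3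
    obtain ⟨z, hzV, hzWe⟩ := hF2
    set y : ∀ j, X j := Function.update (fF F) e z with hy
    have hyV : ∀ j, y j ∈ V F j := by
      intro j
      by_cases hje : j = e
      · subst hje
        simpa only [hy, Function.update_self] using hzV
      · simp only [hy, Function.update_of_ne hje]
        exact hfV F j
    have hyU0 : y ∈ U0 := by
      apply hsub
      intro j hj
      by_cases hje : j = e
      · subst hje
        have : We = w j := if_pos hj
        simpa only [hy, Function.update_self, ← this] using hzWe
      · simp only [hy, Function.update_of_ne hje]
        exact hF3 j (Finset.mem_erase.2 ⟨hje, hj⟩)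
    exact hVavoid F y hyV ⟨U0, hU0𝒰⟩ (hF1 (Finset.mem_singleton_self _)) hyU0
end

section
/- Let λ be an infinite cardinal. If X is a topological space that is D-pseudocompact for every ultrafilter D over λ, and Y is a weakly initially λ-compact topological space, then the product X × Y is weakly initially λ-compact. -/
universe u v

open Set Cardinal Filter Topology TopologicalSpace

/-- If `X` is `D`-pseudocompact for every ultrafilter `D` over `lam` and `Y` is weakly
initially `lam`-compact, then `X × Y` is weakly initially `lam`-compact. -/
theorem stmt19 (lam : Cardinal.{u}) (hlam : ℵ₀ ≤ lam)
    (X Y : Type u) [TopologicalSpace X] [TopologicalSpace Y]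
    (hX : ∀ D : Ultrafilter lam.ord.ToType, DPseudocompact D X)
    (hY : WeakInitiallyCompact Y lam) :
    WeakInitiallyCompact (X × Y) lam := by
  classical
  intro 𝒰 hopen hcov hcard
  by_contra hcon
  push_neg at hcon
  haveI h𝒰inf : Infinite ↥𝒰 := by
    rw [Set.infinite_coe_iff]
    by_contra h
    rw [Set.not_infinite] at h
    exact hcon 𝒰 subset_rfl h (by rw [hcov]; exact dense_univ)
  -- boxes
  have hbox : ∀ F : Finset ↥𝒰, ∃ (a : Set X) (b : Set Y),
      a.Nonempty ∧ b.Nonempty ∧ IsOpen a ∧ IsOpen b ∧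
      ∀ u ∈ F, ∀ x ∈ a, ∀ y ∈ b, (x, y) ∉ (u : Set (X × Y)) := by
    intro F
    have hsub : (Subtype.val '' (↑F : Set ↥𝒰)) ⊆ 𝒰 := Subtype.coe_image_subset _ _
    have hfin : (Subtype.val '' (↑F : Set ↥𝒰)).Finite := F.finite_toSet.image _
    have hnd := hcon _ hsub hfin
    have hne : (closure (⋃₀ (Subtype.val '' (↑F : Set ↥𝒰))))ᶜ.Nonempty := by
      rw [Set.nonempty_compl]
      intro h
      exact hnd (dense_iff_closure_eq.mpr h)
    obtain ⟨z, hz⟩ := hne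
    obtain ⟨a, b, hao, hbo, hza, hzb, hsub2⟩ :=
      isOpen_prod_iff.mp isClosed_closure.isOpen_compl z.1 z.2 (by rw [Prod.mk.eta]; exact hz)
    refine ⟨a, b, ⟨z.1, hza⟩, ⟨z.2, hzb⟩, hao, hbo, ?_⟩
    intro u hu x hx y hy hmem
    have h1 : (x, y) ∈ (closure (⋃₀ (Subtype.val '' (↑F : Set ↥𝒰))))ᶜ := hsub2 ⟨hx, hy⟩
    exact h1 (subset_closure ⟨↑u, ⟨u, by simpa using hu, rfl⟩, hmem⟩)
  choose A B hAne hBne hAo hBo hdisj using hbox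
  -- cluster point q in Y
  have hq : ∃ q : Y, ∀ M : Set Y, IsOpen M → q ∈ M →
      ∀ F : Finset ↥𝒰, ∃ G, F ⊆ G ∧ (M ∩ B G).Nonempty := by
    by_contra hnq
    push_neg at hnq
    set W : Finset ↥𝒰 → Set Y := fun F => (closure (⋃ G, ⋃ (_ : F ⊆ G), B G))ᶜ with hW
    have hWopen : ∀ F, IsOpen (W F) := fun F => isClosed_closure.isOpen_compl
    have hWmono : ∀ F F' : Finset ↥𝒰, F ⊆ F' → W F ⊆ W F' := by
      intro F F' hFF'
      apply compl_subset_compl.mpr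
      apply closure_mono
      exact Set.iUnion₂_subset fun G hG =>
        Set.subset_iUnion₂ (s := fun G' (_ : F ⊆ G') => B G') G (hFF'.trans hG)
    obtain ⟨𝒱, h𝒱sub, h𝒱fin, h𝒱dense⟩ := hY (Set.range W)
      (by rintro _ ⟨F, rfl⟩; exact hWopen F)
      (by
        ext q
        simp only [Set.mem_sUnion, Set.mem_range, Set.mem_univ, iff_true]
        obtain ⟨M, hMo, hqM, F, hall⟩ := hnq q
        refine ⟨W F, ⟨F, rfl⟩, ?_⟩
        intro hqcl
        obtain ⟨y, hyM, hyT⟩ := mem_closure_iff.mp hqcl M hMo hqM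
        simp only [Set.mem_iUnion] at hyT
        obtain ⟨G, hFG, hyB⟩ := hyT
        exact Set.eq_empty_iff_forall_notMem.mp (hall G hFG) y ⟨hyM, hyB⟩)
      (le_trans (mk_range_le.trans (by rw [Cardinal.mk_finset_of_infinite])) hcard)
    have hkey : ∀ 𝒱' : Set (Set Y), 𝒱'.Finite → 𝒱' ⊆ Set.range W →
        ∃ Fs : Finset ↥𝒰, ⋃₀ 𝒱' ⊆ W Fs := by
      intro 𝒱' h𝒱'fin
      refine Set.Finite.induction_on
        (motive := fun 𝒱'' _ => 𝒱'' ⊆ Set.range W → ∃ Fs : Finset ↥𝒰, ⋃₀ 𝒱'' ⊆ W Fs)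
        𝒱' h𝒱'fin (fun _ => ⟨∅, by simp⟩) ?_
      intro s 𝒱'' _ _ ih hsub'
      obtain ⟨F₁, hF₁⟩ := hsub' (Set.mem_insert s 𝒱'')
      obtain ⟨F₂, hF₂⟩ := ih fun t ht => hsub' (Set.mem_insert_of_mem s ht)
      refine ⟨F₁ ∪ F₂, ?_⟩
      rw [Set.sUnion_insert]
      refine Set.union_subset ?_ (hF₂.trans (hWmono _ _ Finset.subset_union_right))
      rw [← hF₁]
      exact hWmono _ _ Finset.subset_union_left
    obtain ⟨Fs, hsub⟩ := hkey 𝒱 h𝒱fin h𝒱sub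
    have hdense : Dense (W Fs) := h𝒱dense.mono hsub
    obtain ⟨y, hyB, hyW⟩ := hdense.inter_open_nonempty (B Fs) (hBo Fs) (hBne Fs)
    exact hyW (subset_closure (Set.mem_iUnion₂.mpr ⟨Fs, subset_rfl, hyB⟩))
  obtain ⟨q, hq⟩ := hq
  -- surjection from lam.ord.ToType onto Finset ↥𝒰
  haveI hκne : Nonempty lam.ord.ToType :=
    Cardinal.mk_ne_zero_iff.mp
      (by rw [Cardinal.mk_ord_toType]; exact (lt_of_lt_of_le aleph0_pos hlam).ne')
  have hle : #(Finset ↥𝒰) ≤ #(lam.ord.ToType) := by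
    rw [Cardinal.mk_ord_toType, Cardinal.mk_finset_of_infinite]; exact hcard
  obtain ⟨e⟩ := Cardinal.le_def _ _ |>.mp hle
  set f : lam.ord.ToType → Finset ↥𝒰 := Function.invFun e with hf
  have hfs : Function.Surjective f := Function.invFun_surjective e.injective
  -- the filter base
  set 𝒮 : Set (Set lam.ord.ToType) :=
    {S | ∃ (M : Set Y) (F : Finset ↥𝒰), IsOpen M ∧ q ∈ M ∧
      S = f ⁻¹' {G | F ⊆ G ∧ (M ∩ B G).Nonempty}} with h𝒮
  have haux : ∀ T : Finset (Set lam.ord.ToType), (↑T : Set (Set lam.ord.ToType)) ⊆ 𝒮 →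
      ∃ (M : Set Y) (F : Finset ↥𝒰), IsOpen M ∧ q ∈ M ∧
        ∀ t ∈ T, f ⁻¹' {G | F ⊆ G ∧ (M ∩ B G).Nonempty} ⊆ t := by
    intro T
    induction T using Finset.induction_on with
    | empty => exact fun _ => ⟨Set.univ, ∅, isOpen_univ, Set.mem_univ q, by simp⟩
    | insert s T' hnotmem ih =>
      intro hsub
      obtain ⟨M₁, F₁, hM₁o, hqM₁, hs⟩ := hsub (Finset.mem_insert_self s T')
      obtain ⟨M₂, F₂, hM₂o, hqM₂, hall⟩ := ih fun t ht =>
        hsub (Finset.mem_insert_of_mem ht)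
      refine ⟨M₁ ∩ M₂, F₁ ∪ F₂, hM₁o.inter hM₂o, ⟨hqM₁, hqM₂⟩, ?_⟩
      intro t ht
      rcases Finset.mem_insert.mp ht with rfl | ht'
      · rw [hs]
        intro i hi
        exact ⟨(Finset.union_subset_iff.mp hi.1).1,
          hi.2.mono (Set.inter_subset_inter_left _ (Set.inter_subset_left))⟩
      · refine Set.Subset.trans ?_ (hall t ht')
        intro i hi
        exact ⟨(Finset.union_subset_iff.mp hi.1).2,
          hi.2.mono (Set.inter_subset_inter_left _ (Set.inter_subset_right))⟩
  obtain ⟨D, hD⟩ := Ultrafilter.exists_ultrafilter_of_finite_inter_nonempty 𝒮 (by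
    intro T hT
    obtain ⟨M, F, hMo, hqM, hall⟩ := haux T hT
    obtain ⟨G, hFG, hMB⟩ := hq M hMo hqM F
    obtain ⟨i, rfl⟩ := hfs G
    exact ⟨i, fun t ht => hall t (by simpa using ht) ⟨hFG, hMB⟩⟩)
  -- D-limit point in X
  obtain ⟨p, hp⟩ := hX D (fun i => A (f i)) (fun i => hAo _) (fun i => hAne _)
  -- the contradiction
  have hpq : (p, q) ∈ ⋃₀ 𝒰 := by rw [hcov]; exact Set.mem_univ _
  obtain ⟨U, hU𝒰, hpqU⟩ := hpq
  obtain ⟨N, M, hNo, hMo, hpN, hqM, hNM⟩ := isOpen_prod_iff.mp (hopen U hU𝒰) p q hpqU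
  have hE₁ : {i | (N ∩ A (f i)).Nonempty} ∈ D := hp N (hNo.mem_nhds hpN)
  have hE₂ : f ⁻¹' {G | {(⟨U, hU𝒰⟩ : ↥𝒰)} ⊆ G ∧ (M ∩ B G).Nonempty} ∈ D :=
    hD ⟨M, {⟨U, hU𝒰⟩}, hMo, hqM, rfl⟩
  obtain ⟨i, hi₁, hi₂⟩ := Filter.nonempty_of_mem (Filter.inter_mem hE₁ hE₂)
  obtain ⟨a, haN, haA⟩ := hi₁
  obtain ⟨hUG, b, hbM, hbB⟩ := hi₂
  exact hdisj (f i) ⟨U, hU𝒰⟩ (hUG (Finset.mem_singleton_self _)) a haA b hbB (hNM ⟨haN, hbM⟩)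
end
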